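/- arXiv:math/0607249 — 3 statements merged into one kernel-verified Lean document; each statement's English description precedes it below -/
import Mathlib

section
/- A binomial B = x^u - x^v ∈ I_A of A-degree b is indispensable if and only if the graph G(b) consists of exactly two connected components, which are the singletons {x^u} and {x^v}. Moreover, in this case b is a minimal binomial A-degree. -/
open MvPolynomial

noncomputable section

/-- The `A`-degree of a monomial exponent vector `u`. -/
def degA {m n : ℕ} (A : Fin m → Fin n → ℤ) (u : Fin m →₀ ℕ) : Fin n → ℤ :=
  ∑ i, (u i : ℤ) • A i

/-- The affine semigroup `ℕA` is pointed. -/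
def IsPointed {m n : ℕ} (A : Fin m → Fin n → ℤ) : Prop :=
  ∀ u v : Fin m →₀ ℕ, degA A u + degA A v = 0 → degA A u = 0

/-- The toric ideal `I_A`. -/
def toricIdeal (K : Type*) [Field K] {m n : ℕ} (A : Fin m → Fin n → ℤ) :
    Ideal (MvPolynomial (Fin m) K) :=
  Ideal.span {f | ∃ u v : Fin m →₀ ℕ, degA A u = degA A v ∧
    f = monomial u (1 : K) - monomial v 1}

/-- `b` belongs to the affine semigroup `ℕA`. -/
def inNA {m n : ℕ} (A : Fin m → Fin n → ℤ) (b : Fin n → ℤ) : Prop :=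
  ∃ u : Fin m →₀ ℕ, degA A u = b

/-- `c` is strictly smaller than `b` in the natural partial order on `ℕA`. -/
def ltA {m n : ℕ} (A : Fin m → Fin n → ℤ) (c b : Fin n → ℤ) : Prop :=
  (∃ e, inNA A e ∧ b = c + e) ∧ c ≠ b

/-- The ideal `I_{A,b}` generated by binomials of `A`-degree strictly less than `b`. -/
def subIdeal (K : Type*) [Field K] {m n : ℕ} (A : Fin m → Fin n → ℤ) (b : Fin n → ℤ) :
    Ideal (MvPolynomial (Fin m) K) :=
  Ideal.span {f | ∃ u v : Fin m →₀ ℕ, degA A u = degA A v ∧ ltA A (degA A u) b ∧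
    f = monomial u (1 : K) - monomial v 1}

/-- The graph `G(b)` on the fiber `deg_A^{-1}(b)`. -/
def fiberGraph (K : Type*) [Field K] {m n : ℕ} (A : Fin m → Fin n → ℤ) (b : Fin n → ℤ) :
    SimpleGraph {u : Fin m →₀ ℕ // degA A u = b} where
  Adj x y := x ≠ y ∧ monomial x.1 (1 : K) - monomial y.1 1 ∈ subIdeal K A b
  symm := ⟨by
    rintro x y ⟨hne, hmem⟩
    exact ⟨hne.symm, by simpa [neg_sub] using neg_mem hmem⟩⟩
  loopless := ⟨fun x h => h.1 rfl⟩

/-- A set of binomials of `I_A`. -/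
def IsBinomialSet (K : Type*) [Field K] {m n : ℕ} (A : Fin m → Fin n → ℤ)
    (S : Set (MvPolynomial (Fin m) K)) : Prop :=
  ∀ f ∈ S, ∃ u v : Fin m →₀ ℕ, degA A u = degA A v ∧ f = monomial u (1 : K) - monomial v 1

/-- A minimal system of binomial generators of `I_A`. -/
def IsMinimalGenSet (K : Type*) [Field K] {m n : ℕ} (A : Fin m → Fin n → ℤ)
    (S : Set (MvPolynomial (Fin m) K)) : Prop :=
  IsBinomialSet K A S ∧ Ideal.span S = toricIdeal K A ∧
    ∀ T : Set (MvPolynomial (Fin m) K), T ⊂ S → Ideal.span T ≠ toricIdeal K A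

/-- `b` is a Betti `A`-degree. -/
def IsBettiDegree (K : Type*) [Field K] {m n : ℕ} (A : Fin m → Fin n → ℤ)
    (b : Fin n → ℤ) : Prop :=
  ∃ S, IsMinimalGenSet K A S ∧ ∃ u v : Fin m →₀ ℕ, degA A u = b ∧ degA A v = b ∧
    monomial u (1 : K) - monomial v 1 ∈ S

/-- `b` is the `A`-degree of a nonzero binomial of `I_A`. -/
def IsBinomialDegree {m n : ℕ} (A : Fin m → Fin n → ℤ) (b : Fin n → ℤ) : Prop :=
  ∃ u v : Fin m →₀ ℕ, u ≠ v ∧ degA A u = b ∧ degA A v = b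

/-- `b` is a minimal binomial `A`-degree. -/
def IsMinimalBinomialDegree {m n : ℕ} (A : Fin m → Fin n → ℤ) (b : Fin n → ℤ) : Prop :=
  IsBinomialDegree A b ∧ ∀ c, IsBinomialDegree A c → ¬ ltA A c b

/-- An indispensable binomial of `I_A`: it belongs, up to sign, to every binomial
generating set of `I_A`. -/
def IsIndispensableBinomial (K : Type*) [Field K] {m n : ℕ} (A : Fin m → Fin n → ℤ)
    (f : MvPolynomial (Fin m) K) : Prop :=
  f ∈ toricIdeal K A ∧
    ∀ S, IsBinomialSet K A S → Ideal.span S = toricIdeal K A → f ∈ S ∨ -f ∈ S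

/-- The number of minimal systems of binomial generators of `I_A`, where the
sign of a binomial does not count (a system is recorded as the set of its
sign-pairs `{f, -f}`). -/
def nuIA (K : Type*) [Field K] {m n : ℕ} (A : Fin m → Fin n → ℤ) : ℕ :=
  Set.ncard {U : Set (Set (MvPolynomial (Fin m) K)) |
    ∃ S, IsMinimalGenSet K A S ∧ U = (fun f => ({f, -f} : Set (MvPolynomial (Fin m) K))) '' S}

/-- The number of elements of `A`-degree `b` in the generating set `S`. -/
def betti0 (K : Type*) [Field K] {m n : ℕ} (A : Fin m → Fin n → ℤ)
    (S : Set (MvPolynomial (Fin m) K)) (b : Fin n → ℤ) : ℕ :=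
  Set.ncard {f ∈ S | ∃ u v : Fin m →₀ ℕ, degA A u = b ∧ degA A v = b ∧
    f = monomial u (1 : K) - monomial v 1}

/-- The set of exponents of monomials of the monomial ideal `M_A`. -/
def MAset {m n : ℕ} (A : Fin m → Fin n → ℤ) : Set (Fin m →₀ ℕ) :=
  {u | ∃ v : Fin m →₀ ℕ, v ≠ u ∧ degA A v = degA A u}

/-- The minimal monomial generating set `T_A` of `M_A` (monomials of `M_A`
minimal under divisibility). -/
def TA {m n : ℕ} (A : Fin m → Fin n → ℤ) : Set (Fin m →₀ ℕ) :=
  {u ∈ MAset A | ∀ w ∈ MAset A, (∀ i, w i ≤ u i) → w = u}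
/-! ### Auxiliary lemmas -/

lemma degA_add {m n : ℕ} (A : Fin m → Fin n → ℤ) (u v : Fin m →₀ ℕ) :
    degA A (u + v) = degA A u + degA A v := by
  simp [degA, Finsupp.add_apply, add_smul, Finset.sum_add_distrib]

/-- degree-`b` graded projection -/
def projb {K : Type*} [Field K] {m n : ℕ} (A : Fin m → Fin n → ℤ) (b : Fin n → ℤ)
    (p : MvPolynomial (Fin m) K) : MvPolynomial (Fin m) K :=
  AddMonoidAlgebra.ofCoeff (Finsupp.filter (fun w => degA A w = b) (AddMonoidAlgebra.coeff p))

lemma coeff_projb {K : Type*} [Field K] {m n : ℕ} (A : Fin m → Fin n → ℤ) (b : Fin n → ℤ)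
    (p : MvPolynomial (Fin m) K) (z : Fin m →₀ ℕ) :
    coeff z (projb A b p) = if degA A z = b then coeff z p else 0 := by
  classical
  exact Finsupp.filter_apply _ (AddMonoidAlgebra.coeff p) z

lemma projb_add {K : Type*} [Field K] {m n : ℕ} (A : Fin m → Fin n → ℤ) (b : Fin n → ℤ)
    (p q : MvPolynomial (Fin m) K) :
    projb A b (p + q) = projb A b p + projb A b q := by
  ext z
  simp only [coeff_projb, coeff_add]
  split <;> simp

lemma projb_zero {K : Type*} [Field K] {m n : ℕ} (A : Fin m → Fin n → ℤ) (b : Fin n → ℤ) :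
    projb A b (0 : MvPolynomial (Fin m) K) = 0 := by
  ext z; simp [coeff_projb]

lemma projb_sub {K : Type*} [Field K] {m n : ℕ} (A : Fin m → Fin n → ℤ) (b : Fin n → ℤ)
    (p q : MvPolynomial (Fin m) K) :
    projb A b (p - q) = projb A b p - projb A b q := by
  ext z
  simp only [coeff_projb, coeff_sub]
  split <;> simp

lemma projb_sum {K : Type*} [Field K] {m n : ℕ} (A : Fin m → Fin n → ℤ) (b : Fin n → ℤ)
    {ι : Type*} (t : Finset ι) (g : ι → MvPolynomial (Fin m) K) :
    projb A b (∑ i ∈ t, g i) = ∑ i ∈ t, projb A b (g i) := by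
  classical
  induction t using Finset.induction with
  | empty => simp [projb_zero]
  | insert a s h ih => simp [Finset.sum_insert h, projb_add, ih]

lemma projb_mul_monomial {K : Type*} [Field K] {m n : ℕ} (A : Fin m → Fin n → ℤ) (b : Fin n → ℤ)
    (g : MvPolynomial (Fin m) K) (p0 : Fin m →₀ ℕ) :
    projb A b (g * monomial p0 1) = projb A (b - degA A p0) g * monomial p0 1 := by
  classical
  ext z
  rw [coeff_projb, coeff_mul_monomial', coeff_mul_monomial']
  by_cases hle : p0 ≤ z
  · have hz : z - p0 + p0 = z := tsub_add_cancel_of_le hle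
    have hdeg : degA A z = degA A (z - p0) + degA A p0 := by
      conv_lhs => rw [← hz]
      rw [degA_add]
    simp only [hle, if_pos, coeff_projb]
    by_cases hb : degA A z = b
    · have : degA A (z - p0) = b - degA A p0 := by rw [← hb, hdeg]; abel
      simp [hb, this]
    · have : degA A (z - p0) ≠ b - degA A p0 := by
        intro h; apply hb; rw [hdeg, h]; abel
      simp [hb, this]
  · simp [hle]

lemma projb_support {K : Type*} [Field K] {m n : ℕ} (A : Fin m → Fin n → ℤ) (b : Fin n → ℤ)
    (p : MvPolynomial (Fin m) K) (z : Fin m →₀ ℕ) (h : coeff z (projb A b p) ≠ 0) :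
    degA A z = b := by
  by_contra hb
  rw [coeff_projb] at h
  simp [hb] at h

lemma projb_binomial {K : Type*} [Field K] {m n : ℕ} (A : Fin m → Fin n → ℤ) (b : Fin n → ℤ)
    (u v : Fin m →₀ ℕ) (hu : degA A u = b) (hv : degA A v = b) :
    projb A b (monomial u (1 : K) - monomial v 1) = monomial u (1 : K) - monomial v 1 := by
  classical
  ext z
  rw [coeff_projb]
  split
  · rfl
  · rename_i hz
    symm
    simp only [coeff_sub, coeff_monomial]
    have h1 : u ≠ z := fun h => hz (h ▸ hu)
    have h2 : v ≠ z := fun h => hz (h ▸ hv)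
    simp [h1, h2]

/-- If two (formal) binomials with distinct right-hand exponents agree, the first exponent
of one lies among the exponents of the other. -/
lemma mem_pair_of_binomial_eq {K : Type*} [Field K] {m : ℕ} {p q u v : Fin m →₀ ℕ}
    (huv : u ≠ v)
    (h : monomial p (1 : K) - monomial q 1 = monomial u 1 - monomial v 1) :
    p = u ∨ p = v := by
  classical
  by_contra hc
  push_neg at hc
  obtain ⟨hpu, hpv⟩ := hc
  by_cases hqp : q = p
  · subst hqp
    have h1 := congrArg (coeff u) h
    simp [coeff_sub, coeff_monomial, Ne.symm huv] at h1
  · have h0 := congrArg (coeff p) h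
    simp [coeff_sub, coeff_monomial, hqp, Ne.symm hpu, Ne.symm hpv] at h0

/-- A binomial `x^u - x^v` of `A`-degree `b` is indispensable if and only if
`G(b)` consists of exactly the two singleton components `{x^u}` and `{x^v}`;
moreover in that case `b` is a minimal binomial `A`-degree. -/
theorem statement10 {K : Type*} [Field K] {m n : ℕ} (A : Fin m → Fin n → ℤ)
    (hA : IsPointed A) (b : Fin n → ℤ) (u v : Fin m →₀ ℕ) (hne : u ≠ v)
    (hu : degA A u = b) (hv : degA A v = b) :
    (IsIndispensableBinomial K A (monomial u (1 : K) - monomial v 1) ↔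
      ((∀ w : Fin m →₀ ℕ, degA A w = b → w = u ∨ w = v) ∧
        ¬ (fiberGraph K A b).Adj ⟨u, hu⟩ ⟨v, hv⟩)) ∧
    (IsIndispensableBinomial K A (monomial u (1 : K) - monomial v 1) →
      IsMinimalBinomialDegree A b) := by
  classical
  set f : MvPolynomial (Fin m) K := monomial u (1 : K) - monomial v 1 with hfdef
  have hfI : f ∈ toricIdeal K A := Ideal.subset_span ⟨u, v, hu.trans hv.symm, rfl⟩
  have hnegf : -f = monomial v (1 : K) - monomial u 1 := by rw [hfdef, neg_sub]
  -- the full set of binomial generators of the toric ideal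
  set Sfull : Set (MvPolynomial (Fin m) K) :=
    {g | ∃ p q : Fin m →₀ ℕ, degA A p = degA A q ∧ g = monomial p (1 : K) - monomial q 1}
    with hSfull
  have htoric : toricIdeal K A = Ideal.span Sfull := rfl
  set S0 : Set (MvPolynomial (Fin m) K) := Sfull \ {f, -f} with hS0
  have hS0bin : IsBinomialSet K A S0 := fun g hg => hg.1
  -- if f ∈ span S0 then S0 generates the toric ideal, contradicting indispensability
  have hspan_of : f ∈ Ideal.span S0 →
      IsIndispensableBinomial K A f → False := by
    intro hfs hind
    have hsp : Ideal.span S0 = toricIdeal K A := by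
      apply le_antisymm
      · rw [htoric]; exact Ideal.span_mono Set.diff_subset
      · rw [htoric]
        apply Ideal.span_le.2
        intro g hg
        by_cases hgS : g ∈ S0
        · exact Ideal.subset_span hgS
        · have : g ∈ ({f, -f} : Set (MvPolynomial (Fin m) K)) := by
            by_contra hg2
            exact hgS ⟨hg, hg2⟩
          rcases this with h | h
          · exact h ▸ hfs
          · rw [h]
            exact neg_mem hfs
    rcases hind.2 S0 hS0bin hsp with h | h
    · exact h.2 (Or.inl rfl)
    · exact h.2 (Or.inr rfl)
  -- Forward: indispensable → fiber = {u, v}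
  have hfib_of : IsIndispensableBinomial K A f →
      ∀ w : Fin m →₀ ℕ, degA A w = b → w = u ∨ w = v := by
    intro hind w hw
    by_contra hc
    push_neg at hc
    obtain ⟨hwu, hwv⟩ := hc
    set g1 : MvPolynomial (Fin m) K := monomial u (1 : K) - monomial w 1 with hg1
    set g2 : MvPolynomial (Fin m) K := monomial w (1 : K) - monomial v 1 with hg2
    have hcw1 : coeff w g1 = -1 := by
      simp [hg1, coeff_sub, coeff_monomial, Ne.symm hwu]
    have hcw2 : coeff w g2 = 1 := by
      simp [hg2, coeff_sub, coeff_monomial, Ne.symm hwv]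
    have hcwf : coeff w f = 0 := by
      simp [hfdef, coeff_sub, coeff_monomial, Ne.symm hwu, Ne.symm hwv]
    have hg1S : g1 ∈ S0 := by
      refine ⟨⟨u, w, hu.trans hw.symm, rfl⟩, ?_⟩
      rintro (h | h)
      · rw [h, hcwf] at hcw1
        exact one_ne_zero (neg_eq_zero.mp hcw1.symm)
      · rw [h, coeff_neg, hcwf, neg_zero] at hcw1
        exact one_ne_zero (neg_eq_zero.mp hcw1.symm)
    have hg2S : g2 ∈ S0 := by
      refine ⟨⟨w, v, hw.trans hv.symm, rfl⟩, ?_⟩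
      rintro (h | h)
      · rw [h, hcwf] at hcw2; exact one_ne_zero hcw2.symm
      · rw [h, coeff_neg, hcwf, neg_zero] at hcw2; exact one_ne_zero hcw2.symm
    have hfsum : f = g1 + g2 := by rw [hfdef, hg1, hg2]; ring
    exact hspan_of (hfsum ▸ add_mem (Ideal.subset_span hg1S) (Ideal.subset_span hg2S)) hind
  -- Forward: indispensable → not adjacent
  have hadj_of : IsIndispensableBinomial K A f →
      ¬ (fiberGraph K A b).Adj ⟨u, hu⟩ ⟨v, hv⟩ := by
    intro hind hadj
    have hmem : f ∈ subIdeal K A b := (show _ ≠ _ ∧ f ∈ subIdeal K A b from hadj).2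
    have hsub : subIdeal K A b ≤ Ideal.span S0 := by
      apply Ideal.span_le.2
      intro g hg
      obtain ⟨p, q, hpq, hlt, hgval⟩ := hg
      refine Ideal.subset_span ⟨⟨p, q, hpq, hgval⟩, ?_⟩
      rintro (h | h)
      · rw [h] at hgval
        rcases mem_pair_of_binomial_eq hne hgval.symm with h' | h'
        · exact hlt.2 (h' ▸ hu)
        · exact hlt.2 (h' ▸ hv)
      · rw [h, hnegf] at hgval
        rcases mem_pair_of_binomial_eq (Ne.symm hne) hgval.symm with h' | h'
        · exact hlt.2 (h' ▸ hv)
        · exact hlt.2 (h' ▸ hu)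
    exact hspan_of (hsub hmem) hind
  -- Backward: the two conditions imply indispensability
  have hback : (∀ w : Fin m →₀ ℕ, degA A w = b → w = u ∨ w = v) →
      ¬ (fiberGraph K A b).Adj ⟨u, hu⟩ ⟨v, hv⟩ →
      IsIndispensableBinomial K A f := by
    intro Hfib Hnadj
    refine ⟨hfI, ?_⟩
    intro S hSbin hSspan
    by_contra hcon
    push_neg at hcon
    obtain ⟨hfS, hnfS⟩ := hcon
    have hfspan : f ∈ Ideal.span S := by rw [hSspan]; exact hfI
    rw [Ideal.span] at hfspan
    rw [Submodule.mem_span_set] at hfspan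
    obtain ⟨c, hsupp, hsum⟩ := hfspan
    have key : f ∈ subIdeal K A b := by
      have hf2 : f = ∑ s ∈ c.support, projb A b (c s * s) := by
        conv_lhs => rw [hfdef, ← projb_binomial A b u v hu hv, ← hfdef, ← hsum]
        rw [Finsupp.sum, projb_sum]
        exact Finset.sum_congr rfl fun s _ => by rw [smul_eq_mul]
      rw [hf2]
      apply Ideal.sum_mem
      intro s hs
      obtain ⟨p, q, hpq, hsval⟩ := hSbin s (hsupp hs)
      by_cases hpq0 : p = q
      · have hs0 : s = 0 := by rw [hsval, hpq0, sub_self]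
        rw [hs0, mul_zero, projb_zero]
        exact zero_mem _
      · have hsplit : projb A b (c s * s)
            = projb A (b - degA A p) (c s) * s := by
          rw [hsval, mul_sub, projb_sub, projb_mul_monomial, projb_mul_monomial, ← hpq,
            ← mul_sub]
        rw [hsplit]
        by_cases hh : projb A (b - degA A p) (c s) = 0
        · rw [hh, zero_mul]; exact zero_mem _
        · obtain ⟨w, hw⟩ := MvPolynomial.ne_zero_iff.mp hh
          have hwdeg : degA A w = b - degA A p := projb_support A _ (c s) w hw
          by_cases hdb : degA A p = b
          · -- s is a binomial in the fiber of b: it must be ±f, contradiction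
            exfalso
            have hp' : p = u ∨ p = v := Hfib p hdb
            have hq' : q = u ∨ q = v := Hfib q (hpq ▸ hdb)
            rcases hp' with hp' | hp' <;> rcases hq' with hq' | hq'
            · exact hpq0 (hp'.trans hq'.symm)
            · apply hfS
              have hsf : s = f := by rw [hsval, hp', hq', hfdef]
              exact hsf ▸ hsupp hs
            · apply hnfS
              have : s = -f := by rw [hsval, hp', hq', hnegf]
              exact this ▸ hsupp hs
            · exact hpq0 (hp'.trans hq'.symm)
          · have hlt : ltA A (degA A p) b := by
              refine ⟨⟨b - degA A p, ⟨w, hwdeg⟩, ?_⟩, hdb⟩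
              abel
            have hsmem : s ∈ subIdeal K A b :=
              Ideal.subset_span ⟨p, q, hpq, hlt, hsval⟩
            exact Ideal.mul_mem_left _ _ hsmem
    exact Hnadj (show _ ≠ _ ∧ _ from ⟨fun h => hne (congrArg Subtype.val h), key⟩)
  have hiff : IsIndispensableBinomial K A f ↔
      ((∀ w : Fin m →₀ ℕ, degA A w = b → w = u ∨ w = v) ∧
        ¬ (fiberGraph K A b).Adj ⟨u, hu⟩ ⟨v, hv⟩) :=
    ⟨fun hind => ⟨hfib_of hind, hadj_of hind⟩, fun h => hback h.1 h.2⟩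
  refine ⟨hiff, ?_⟩
  -- the "moreover" part
  intro hind
  obtain ⟨Hfib, Hnadj⟩ := hiff.mp hind
  refine ⟨⟨u, v, hne, hu, hv⟩, ?_⟩
  rintro cdeg ⟨p, q, hpqne, hp, hq⟩ ⟨⟨e, ⟨a, ha⟩, hbe⟩, hcb⟩
  have hp' : degA A (p + a) = b := by rw [degA_add, hp, ha, hbe]
  have hq' : degA A (q + a) = b := by rw [degA_add, hq, ha, hbe]
  have hne' : p + a ≠ q + a := fun h => hpqne (by
    have := congrArg (fun z : Fin m →₀ ℕ => z - a) h
    simpa using this)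
  have hbmem : monomial p (1 : K) - monomial q 1 ∈ subIdeal K A b := by
    refine Ideal.subset_span ⟨p, q, hp.trans hq.symm, ⟨⟨e, ⟨a, ha⟩, by rw [hp]; exact hbe⟩,
      by rw [hp]; exact hcb⟩, rfl⟩
  have hmul : monomial a (1 : K) * (monomial p 1 - monomial q 1)
      = monomial (p + a) 1 - monomial (q + a) 1 := by
    rw [mul_sub, monomial_mul, monomial_mul, one_mul, add_comm a p, add_comm a q]
  have hmem2 : monomial (p + a) (1 : K) - monomial (q + a) 1 ∈ subIdeal K A b := by
    rw [← hmul]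
    exact Ideal.mul_mem_left _ _ hbmem
  apply Hnadj
  have hmemf : monomial u (1 : K) - monomial v 1 ∈ subIdeal K A b := by
    rcases Hfib (p + a) hp' with h1 | h1 <;> rcases Hfib (q + a) hq' with h2 | h2
    · exact absurd (h1.trans h2.symm) hne'
    · rw [← h1, ← h2]; exact hmem2
    · have heq : monomial u (1 : K) - monomial v 1
          = -(monomial (p + a) (1 : K) - monomial (q + a) 1) := by
        rw [neg_sub, h1, h2]
      rw [heq]
      exact neg_mem hmem2
    · exact absurd (h1.trans h2.symm) hne'
  exact (show _ ≠ _ ∧ _ from ⟨fun h => hne (congrArg Subtype.val h), hmemf⟩)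
end
end

section
/- The toric ideal I_A is generated by its indispensable binomials if and only if every Betti A-degree of I_A is a minimal binomial A-degree and the A-graded Betti number β_{0,b} equals 1 for every Betti A-degree b. -/
open MvPolynomial

noncomputable section

namespace St12

variable {K : Type*} [Field K] {m n : ℕ} {A : Fin m → Fin n → ℤ}



abbrev binom (K : Type*) [Field K] {m : ℕ} (u v : Fin m →₀ ℕ) : MvPolynomial (Fin m) K :=
  monomial u (1 : K) - monomial v 1

def Bset (K : Type*) [Field K] {m n : ℕ} (A : Fin m → Fin n → ℤ) :
    Set (MvPolynomial (Fin m) K) :=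
  {f | ∃ u v : Fin m →₀ ℕ, degA A u = degA A v ∧ f = monomial u (1 : K) - monomial v 1}

lemma toricIdeal_eq : toricIdeal K A = Ideal.span (Bset K A) := rfl

lemma degA_add (u v : Fin m →₀ ℕ) : degA A (u + v) = degA A u + degA A v := by
  simp [degA, Finsupp.add_apply, add_smul, Finset.sum_add_distrib]

lemma degA_zero : degA A (0 : Fin m →₀ ℕ) = 0 := by
  simp [degA]

lemma binom_self (u : Fin m →₀ ℕ) : binom K u u = 0 := sub_self _

lemma neg_binom (u v : Fin m →₀ ℕ) : -binom K u v = binom K v u := neg_sub _ _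

lemma binom_ne_zero {u v : Fin m →₀ ℕ} (h : u ≠ v) : binom K u v ≠ 0 := by
  intro heq
  have := congrArg (coeff u) heq
  simp [coeff_monomial, h, Ne.symm h] at this

lemma binom_inj {u v p q : Fin m →₀ ℕ} (huv : u ≠ v)
    (h : binom K u v = binom K p q) : (p = u ∧ q = v) ∨ (p = v ∧ q = u) := by
  classical
  have hpq : p ≠ q := by
    rintro rfl
    rw [binom_self] at h
    exact binom_ne_zero huv h
  have hp : (if u = p then (1:K) else 0) - (if v = p then 1 else 0) = 1 := by
    have := congrArg (coeff p) h
    simpa [coeff_monomial, Ne.symm hpq] using this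
  have hq : (if u = q then (1:K) else 0) - (if v = q then 1 else 0) = -1 := by
    have := congrArg (coeff q) h
    simpa [coeff_monomial, hpq, sub_eq_neg_self] using this
  by_cases hup : u = p
  · by_cases hvp : v = p
    · exact absurd (hup.trans hvp.symm) huv
    · by_cases hvq : v = q
      · exact Or.inl ⟨hup.symm, hvq.symm⟩
      · by_cases huq : u = q
        · exact absurd (hup.symm.trans huq) hpq
        · simp [huq, hvq] at hq
  · by_cases hvp : v = p
    · by_cases huq : u = q
      · exact Or.inr ⟨hvp.symm, huq.symm⟩
      · by_cases hvq : v = q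
        · exact absurd (hvp.symm.trans hvq) hpq
        · simp [huq, hvq] at hq
    · simp [hup, hvp] at hp



lemma mem_Bset {f : MvPolynomial (Fin m) K} :
    f ∈ Bset K A ↔ ∃ u v : Fin m →₀ ℕ, degA A u = degA A v ∧ f = binom K u v := Iff.rfl

lemma binom_mem_Bset {u v : Fin m →₀ ℕ} (h : degA A u = degA A v) :
    binom K u v ∈ Bset K A := ⟨u, v, h, rfl⟩

lemma zero_mem_Bset : (0 : MvPolynomial (Fin m) K) ∈ Bset K A :=
  ⟨0, 0, rfl, (binom_self (K := K) 0).symm⟩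

lemma neg_mem_Bset {f : MvPolynomial (Fin m) K} (h : f ∈ Bset K A) : -f ∈ Bset K A := by
  obtain ⟨u, v, hd, rfl⟩ := h
  exact ⟨v, u, hd.symm, neg_binom u v⟩

lemma Bset_rep {f : MvPolynomial (Fin m) K} (h : f ∈ Bset K A) (h0 : f ≠ 0) :
    ∃ u v : Fin m →₀ ℕ, u ≠ v ∧ degA A u = degA A v ∧ f = binom K u v := by
  obtain ⟨u, v, hd, rfl⟩ := h
  refine ⟨u, v, ?_, hd, rfl⟩
  rintro rfl; exact h0 (binom_self u)

lemma Bset_subset_toric : Bset K A ⊆ (toricIdeal K A : Set (MvPolynomial (Fin m) K)) :=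
  fun _ hf => Ideal.subset_span hf

lemma span_le_toric {S : Set (MvPolynomial (Fin m) K)} (h : S ⊆ Bset K A) :
    Ideal.span S ≤ toricIdeal K A := by
  rw [toricIdeal_eq]; exact Ideal.span_mono h

/-- The translated-edge relation of a set of binomials. -/
def rel (K : Type*) [Field K] {m : ℕ} (S : Set (MvPolynomial (Fin m) K))
    (p q : Fin m →₀ ℕ) : Prop :=
  ∃ c u v : Fin m →₀ ℕ, binom K u v ∈ S ∧ p = c + u ∧ q = c + v

lemma rel_of_mem {S : Set (MvPolynomial (Fin m) K)} {u v : Fin m →₀ ℕ}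
    (h : binom K u v ∈ S) : rel K S u v :=
  ⟨0, u, v, h, (zero_add u).symm, (zero_add v).symm⟩

lemma rel_mono {S T : Set (MvPolynomial (Fin m) K)} (h : S ⊆ T) {p q : Fin m →₀ ℕ}
    (hr : rel K S p q) : rel K T p q := by
  obtain ⟨c, a, a', hm, hp, hq⟩ := hr
  exact ⟨c, a, a', h hm, hp, hq⟩

lemma rel_translate {S : Set (MvPolynomial (Fin m) K)} (c : Fin m →₀ ℕ) {p q : Fin m →₀ ℕ}
    (hr : rel K S p q) : rel K S (c + p) (c + q) := by
  obtain ⟨c', a, a', hm, rfl, rfl⟩ := hr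
  exact ⟨c + c', a, a', hm, (add_assoc c c' a).symm, (add_assoc c c' a').symm⟩

/-- Invariant principle: any equivalence relation containing `rel S` contains its
equivalence closure. -/
lemma eqv_invariant {S : Set (MvPolynomial (Fin m) K)}
    {E : (Fin m →₀ ℕ) → (Fin m →₀ ℕ) → Prop} (hE : Equivalence E)
    (h : ∀ p q, rel K S p q → E p q) {p q : Fin m →₀ ℕ}
    (hpq : Relation.EqvGen (rel K S) p q) : E p q := by
  induction hpq with
  | rel x y hxy => exact h x y hxy
  | refl x => exact hE.refl x
  | symm x y _ ih => exact hE.symm ih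
  | trans x y z _ _ ih1 ih2 => exact hE.trans ih1 ih2

lemma eqv_translate {S : Set (MvPolynomial (Fin m) K)} (c : Fin m →₀ ℕ) {p q : Fin m →₀ ℕ}
    (h : Relation.EqvGen (rel K S) p q) :
    Relation.EqvGen (rel K S) (c + p) (c + q) := by
  have hE : Equivalence (fun x y => Relation.EqvGen (rel K S) (c + x) (c + y)) := by
    refine ⟨fun x => Relation.EqvGen.refl _, fun h => Relation.EqvGen.symm _ _ h,
      fun h1 h2 => Relation.EqvGen.trans _ _ _ h1 h2⟩
  exact eqv_invariant hE (fun p q hr => Relation.EqvGen.rel _ _ (rel_translate c hr)) h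

lemma rel_decompose {S : Set (MvPolynomial (Fin m) K)} (hS : S ⊆ Bset K A)
    {p q : Fin m →₀ ℕ} (h : rel K S p q) :
    p = q ∨ ∃ c a a' : Fin m →₀ ℕ, a ≠ a' ∧ degA A a = degA A a' ∧ binom K a a' ∈ S ∧
      p = c + a ∧ q = c + a' := by
  obtain ⟨c, a, a', hm, rfl, rfl⟩ := h
  by_cases haa : a = a'
  · exact Or.inl (by rw [haa])
  · obtain ⟨u', v', hd, heq⟩ := hS hm
    rcases binom_inj haa heq with ⟨h1, h2⟩ | ⟨h1, h2⟩
    · exact Or.inr ⟨c, a, a', haa, h1 ▸ h2 ▸ hd, hm, rfl, rfl⟩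
    · exact Or.inr ⟨c, a, a', haa, h1 ▸ h2 ▸ hd.symm, hm, rfl, rfl⟩

lemma rel_deg {S : Set (MvPolynomial (Fin m) K)} (hS : S ⊆ Bset K A)
    {p q : Fin m →₀ ℕ} (h : rel K S p q) : degA A p = degA A q := by
  rcases rel_decompose hS h with rfl | ⟨c, a, a', _, hd, _, rfl, rfl⟩
  · rfl
  · rw [degA_add, degA_add, hd]

lemma eqv_deg {S : Set (MvPolynomial (Fin m) K)} (hS : S ⊆ Bset K A)
    {p q : Fin m →₀ ℕ} (h : Relation.EqvGen (rel K S) p q) : degA A p = degA A q :=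
  eqv_invariant (E := fun p q => degA A p = degA A q)
    ⟨fun _ => rfl, Eq.symm, Eq.trans⟩ (fun _ _ hr => rel_deg hS hr) h

lemma master_easy {S : Set (MvPolynomial (Fin m) K)} {u v : Fin m →₀ ℕ}
    (h : Relation.EqvGen (rel K S) u v) : binom K u v ∈ Ideal.span S := by
  induction h with
  | rel x y hxy =>
    obtain ⟨c, a, a', hm, rfl, rfl⟩ := hxy
    have : binom K (c + a) (c + a') = monomial c 1 * binom K a a' := by
      simp [binom, mul_sub, monomial_mul]
    rw [this]
    exact Ideal.mul_mem_left _ _ (Ideal.subset_span hm)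
  | refl x => rw [binom_self]; exact zero_mem _
  | symm x y _ ih => rw [← neg_binom]; exact neg_mem ih
  | trans x y z _ _ ih1 ih2 =>
    have : binom K x z = binom K x y + binom K y z := (sub_add_sub_cancel _ _ _).symm
    rw [this]; exact add_mem ih1 ih2

/-- monomial multiples of elements of `S`. -/
def Msat (K : Type*) [Field K] {m : ℕ} (S : Set (MvPolynomial (Fin m) K)) :
    Set (MvPolynomial (Fin m) K) :=
  {f | ∃ c g, g ∈ S ∧ f = monomial c (1 : K) * g}

lemma span_le_spanK_Msat {S : Set (MvPolynomial (Fin m) K)} :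
    (Ideal.span S : Set (MvPolynomial (Fin m) K)) ⊆
      (Submodule.span K (Msat K S) : Set (MvPolynomial (Fin m) K)) := by
  set N := Submodule.span K (Msat K S) with hN
  have hmono : ∀ (c : Fin m →₀ ℕ), ∀ f ∈ N, monomial c (1:K) * f ∈ N := by
    intro c f hf
    refine Submodule.span_induction (p := fun f _ => monomial c (1:K) * f ∈ N)
      ?_ ?_ ?_ ?_ hf
    · rintro x ⟨c', g, hg, rfl⟩
      rw [← mul_assoc, monomial_mul, one_mul]
      exact Submodule.subset_span ⟨c + c', g, hg, rfl⟩
    · show monomial c (1:K) * 0 ∈ N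
      rw [mul_zero]; exact zero_mem _
    · intro x y _ _ hx hy
      show monomial c (1:K) * (x + y) ∈ N
      rw [mul_add]; exact add_mem hx hy
    · intro a x _ hx
      show monomial c (1:K) * (a • x) ∈ N
      rw [mul_smul_comm]; exact Submodule.smul_mem _ _ hx
  have hmul : ∀ (r : MvPolynomial (Fin m) K), ∀ f ∈ N, r * f ∈ N := by
    intro r
    induction r using MvPolynomial.induction_on with
    | C a => intro f hf; rw [MvPolynomial.C_mul']; exact Submodule.smul_mem _ _ hf
    | add p q ihp ihq => intro f hf; rw [add_mul]; exact add_mem (ihp f hf) (ihq f hf)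
    | mul_X p i ihp =>
      intro f hf
      have hX : (X i : MvPolynomial (Fin m) K) = monomial (Finsupp.single i 1) 1 := rfl
      rw [mul_comm p (X i), mul_assoc, hX]
      exact hmono _ _ (ihp f hf)
  have hJ : Ideal.span S ≤
      { carrier := N,
        add_mem' := fun ha hb => add_mem ha hb,
        zero_mem' := zero_mem _,
        smul_mem' := fun r x hx => by simpa [smul_eq_mul] using hmul r x hx } := by
    apply Ideal.span_le.mpr
    intro g hg
    have : g = monomial 0 (1:K) * g := by
      rw [monomial_zero', MvPolynomial.C_1, one_mul]
    exact Submodule.subset_span ⟨0, g, hg, this⟩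
  exact fun f hf => hJ hf

open Classical in
noncomputable def chi {K : Type*} [Field K] {m : ℕ} (C : Set (Fin m →₀ ℕ)) :
    MvPolynomial (Fin m) K →ₗ[K] K :=
  Finsupp.linearCombination K (C.indicator (fun _ => (1:K))) ∘ₗ
    (AddMonoidAlgebra.coeffLinearEquiv K).toLinearMap

lemma chi_monomial {C : Set (Fin m →₀ ℕ)} (u : Fin m →₀ ℕ) :
    chi C (monomial u (1:K)) = C.indicator (fun _ => (1:K)) u := by
  show (Finsupp.linearCombination K _) (Finsupp.single u (1:K)) = _
  rw [Finsupp.linearCombination_single, one_smul]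

lemma chi_binom {C : Set (Fin m →₀ ℕ)} (u v : Fin m →₀ ℕ) :
    chi C (binom K u v) = C.indicator (fun _ => (1:K)) u - C.indicator (fun _ => (1:K)) v := by
  rw [show binom K u v = monomial u (1:K) - monomial v 1 from rfl, map_sub, chi_monomial,
    chi_monomial]

lemma master_hard {S : Set (MvPolynomial (Fin m) K)} (hS : S ⊆ Bset K A) {u v : Fin m →₀ ℕ}
    (h : binom K u v ∈ Ideal.span S) : Relation.EqvGen (rel K S) u v := by
  classical
  set C : Set (Fin m →₀ ℕ) := {w | Relation.EqvGen (rel K S) u w} with hC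
  have hker : Submodule.span K (Msat K S) ≤ LinearMap.ker (chi (K := K) C) := by
    apply Submodule.span_le.mpr
    rintro x ⟨c, g, hg, rfl⟩
    rcases eq_or_ne g 0 with rfl | hg0
    · simp only [SetLike.mem_coe, LinearMap.mem_ker, mul_zero, map_zero]
    · obtain ⟨a, a', _, _, rfl⟩ := Bset_rep (hS hg) hg0
      have hx : monomial c (1:K) * binom K a a' = binom K (c + a) (c + a') := by
        simp [binom, mul_sub, monomial_mul]
      simp only [SetLike.mem_coe, LinearMap.mem_ker]
      rw [hx, chi_binom]
      have hiff : (c + a) ∈ C ↔ (c + a') ∈ C := by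
        have hedge : rel K S (c + a) (c + a') := ⟨c, a, a', hg, rfl, rfl⟩
        constructor
        · intro hmem; exact Relation.EqvGen.trans _ _ _ hmem (Relation.EqvGen.rel _ _ hedge)
        · intro hmem
          exact Relation.EqvGen.trans _ _ _ hmem
            (Relation.EqvGen.symm _ _ (Relation.EqvGen.rel _ _ hedge))
      by_cases hmem : (c + a) ∈ C
      · rw [Set.indicator_of_mem hmem, Set.indicator_of_mem (hiff.mp hmem), sub_self]
      · rw [Set.indicator_of_notMem hmem,
          Set.indicator_of_notMem (fun hh => hmem (hiff.mpr hh)), sub_self]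
  have h0 : chi (K := K) C (binom K u v) = 0 := hker (span_le_spanK_Msat h)
  rw [chi_binom, Set.indicator_of_mem (show u ∈ C from Relation.EqvGen.refl u)] at h0
  by_cases hv : v ∈ C
  · exact hv
  · rw [Set.indicator_of_notMem (show v ∉ C from hv), sub_zero] at h0
    exact absurd h0 one_ne_zero



lemma isBinomialSet_iff {S : Set (MvPolynomial (Fin m) K)} :
    IsBinomialSet K A S ↔ S ⊆ Bset K A := Iff.rfl

lemma gen_connect {S : Set (MvPolynomial (Fin m) K)} (hB : S ⊆ Bset K A)
    (hspan : Ideal.span S = toricIdeal K A) {u v : Fin m →₀ ℕ}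
    (hdeg : degA A u = degA A v) : Relation.EqvGen (rel K S) u v :=
  master_hard hB (by rw [hspan]; exact Bset_subset_toric (binom_mem_Bset hdeg))

lemma connect_gen {S : Set (MvPolynomial (Fin m) K)} (hB : S ⊆ Bset K A)
    (h : ∀ u v : Fin m →₀ ℕ, degA A u = degA A v → Relation.EqvGen (rel K S) u v) :
    Ideal.span S = toricIdeal K A := by
  refine le_antisymm (span_le_toric hB) ?_
  rw [toricIdeal_eq]
  apply Ideal.span_le.mpr
  rintro f ⟨u, v, hdeg, rfl⟩
  exact master_easy (h u v hdeg)

lemma span_diff_zero {S : Set (MvPolynomial (Fin m) K)} :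
    Ideal.span (S \ {0}) = Ideal.span S := by
  refine le_antisymm (Ideal.span_mono Set.diff_subset) (Ideal.span_le.mpr ?_)
  intro f hf
  rcases eq_or_ne f 0 with rfl | h0
  · exact zero_mem _
  · exact Ideal.subset_span ⟨hf, h0⟩

lemma minGen_subset_Bset {S : Set (MvPolynomial (Fin m) K)} (hS : IsMinimalGenSet K A S) :
    S ⊆ Bset K A := hS.1

lemma zero_not_mem_minGen {S : Set (MvPolynomial (Fin m) K)} (hS : IsMinimalGenSet K A S) :
    (0 : MvPolynomial (Fin m) K) ∉ S := by
  intro h0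
  exact hS.2.2 (S \ {0}) (Set.sdiff_singleton_ssubset.mpr h0) (span_diff_zero.trans hS.2.1)

lemma minGen_rep {S : Set (MvPolynomial (Fin m) K)} (hS : IsMinimalGenSet K A S)
    {f : MvPolynomial (Fin m) K} (hf : f ∈ S) :
    ∃ u v : Fin m →₀ ℕ, u ≠ v ∧ degA A u = degA A v ∧ f = binom K u v :=
  Bset_rep (hS.1 f hf) (fun h => zero_not_mem_minGen hS (h ▸ hf))

lemma exists_finite_subgen {S : Set (MvPolynomial (Fin m) K)}
    (hspan : Ideal.span S = toricIdeal K A) :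
    ∃ T : Finset (MvPolynomial (Fin m) K), ↑T ⊆ S ∧ Ideal.span ↑T = toricIdeal K A := by
  obtain ⟨G, hG⟩ := IsNoetherian.noetherian (toricIdeal K A)
  have hmem : ∀ g ∈ G, ∃ T : Finset (MvPolynomial (Fin m) K),
      ↑T ⊆ S ∧ g ∈ Ideal.span (↑T : Set (MvPolynomial (Fin m) K)) := by
    intro g hg
    have : g ∈ Ideal.span S := by
      rw [hspan, ← hG]; exact Ideal.subset_span hg
    exact Submodule.mem_span_finite_of_mem_span this
  classical
  choose! T hT1 hT2 using hmem
  refine ⟨G.biUnion T, ?_, ?_⟩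
  · intro f hf
    simp only [Finset.coe_biUnion, Set.mem_iUnion] at hf
    obtain ⟨g, hg, hfg⟩ := hf
    exact hT1 g hg hfg
  · refine le_antisymm ?_ ?_
    · rw [← hspan]
      apply Ideal.span_mono
      intro f hf
      simp only [Finset.coe_biUnion, Set.mem_iUnion] at hf
      obtain ⟨g, hg, hfg⟩ := hf
      exact hT1 g hg hfg
    · rw [← hG]
      apply Ideal.span_le.mpr
      intro g hg
      refine Submodule.span_mono ?_ (hT2 g hg)
      intro f hf
      simp only [Finset.coe_biUnion, Set.mem_iUnion]
      exact ⟨g, hg, hf⟩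

lemma exists_minGen_subset :
    ∀ (k : ℕ) (T : Set (MvPolynomial (Fin m) K)), T.Finite → T.ncard ≤ k →
      T ⊆ Bset K A → Ideal.span T = toricIdeal K A →
      ∃ S ⊆ T, IsMinimalGenSet K A S := by
  intro k
  induction k with
  | zero =>
    intro T hfin hcard hB hspan
    have hT : T = ∅ := by
      rw [← Set.ncard_eq_zero hfin]; omega
    subst hT
    refine ⟨∅, subset_rfl, hB, hspan, ?_⟩
    intro T' hT' _
    simpa using hT'.2 (Set.empty_subset T')
  | succ k ih =>
    intro T hfin hcard hB hspan
    by_cases H : ∃ T' ⊂ T, Ideal.span T' = toricIdeal K A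
    · obtain ⟨T', hT', hspan'⟩ := H
      have hfin' : T'.Finite := hfin.subset hT'.subset
      have hcard' : T'.ncard ≤ k := by
        have := Set.ncard_lt_ncard hT' hfin
        omega
      obtain ⟨S, hSsub, hS⟩ := ih T' hfin' hcard' (fun f hf => hB (hT'.subset hf)) hspan'
      exact ⟨S, hSsub.trans hT'.subset, hS⟩
    · push_neg at H
      exact ⟨T, subset_rfl, hB, hspan, fun T' h1 h2 => H T' h1 h2⟩

lemma exists_minGen : ∃ S : Set (MvPolynomial (Fin m) K), IsMinimalGenSet K A S := by
  obtain ⟨T, hTsub, hTspan⟩ := exists_finite_subgen (S := Bset K A) toricIdeal_eq.symm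
  obtain ⟨S, _, hS⟩ := exists_minGen_subset (K := K) (A := A) (T : Set (MvPolynomial (Fin m) K)).ncard T
    (T.finite_toSet) le_rfl hTsub hTspan
  exact ⟨S, hS⟩

lemma minGen_finite {S : Set (MvPolynomial (Fin m) K)} (hS : IsMinimalGenSet K A S) :
    S.Finite := by
  obtain ⟨T, hTsub, hTspan⟩ := exists_finite_subgen hS.2.1
  have : (T : Set (MvPolynomial (Fin m) K)) = S := by
    by_contra hne
    exact hS.2.2 T ⟨hTsub, fun h => hne (le_antisymm hTsub h)⟩ hTspan
  rw [← this]
  exact T.finite_toSet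



lemma indisp_neg {f : MvPolynomial (Fin m) K} (h : IsIndispensableBinomial K A f) :
    IsIndispensableBinomial K A (-f) :=
  ⟨neg_mem h.1, fun S hB hs => (h.2 S hB hs).elim (fun hf => Or.inr (by simpa using hf))
    (fun hf => Or.inl hf)⟩

lemma indisp_mem_Bset {f : MvPolynomial (Fin m) K} (h : IsIndispensableBinomial K A f) :
    f ∈ Bset K A := by
  rcases h.2 (Bset K A) (fun f hf => hf) toricIdeal_eq.symm with hf | hf
  · exact hf
  · have := neg_mem_Bset hf; simpa using this

lemma indisp_ne_zero {f : MvPolynomial (Fin m) K} (h : IsIndispensableBinomial K A f) :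
    f ≠ 0 := by
  rintro rfl
  have := h.2 (Bset K A \ {0}) (fun g hg => hg.1)
    (span_diff_zero.trans toricIdeal_eq.symm)
  simp at this

lemma not_conn_of_indisp {f : MvPolynomial (Fin m) K} {u v : Fin m →₀ ℕ}
    (hind : IsIndispensableBinomial K A f) (hrep : f = binom K u v) :
    ¬ Relation.EqvGen (rel K (Bset K A \ {f, -f})) u v := by
  intro hconn
  set D := Bset K A \ {f, -f} with hD
  have hBsub : D ⊆ Bset K A := Set.diff_subset
  have hfspan : f ∈ Ideal.span D := by rw [hrep]; exact master_easy hconn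
  have hspan : Ideal.span D = toricIdeal K A := by
    refine le_antisymm (span_le_toric hBsub) ?_
    rw [toricIdeal_eq]
    apply Ideal.span_le.mpr
    intro g hg
    by_cases hgf : g = f
    · subst hgf; exact hfspan
    by_cases hgnf : g = -f
    · subst hgnf; exact neg_mem hfspan
    · exact Ideal.subset_span ⟨hg, by simp [hgf, hgnf]⟩

  rcases hind.2 _ (fun g hg => hBsub hg) hspan with h | h
  · exact h.2 (Set.mem_insert _ _)
  · exact h.2 (Set.mem_insert_iff.mpr (Or.inr rfl))

lemma indisp_fiber {f : MvPolynomial (Fin m) K} {u v : Fin m →₀ ℕ}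
    (hind : IsIndispensableBinomial K A f) (hrep : f = binom K u v)
    (huv : u ≠ v) (hdeg : degA A u = degA A v) :
    (∀ w, degA A w = degA A u → w = u ∨ w = v) ∧ (∀ i, u i = 0 ∨ v i = 0) := by
  constructor
  · intro w hw
    by_contra hcon
    push_neg at hcon
    obtain ⟨hwu, hwv⟩ := hcon
    apply not_conn_of_indisp hind hrep
    have h1 : binom K u w ∈ Bset K A \ {f, -f} := by
      refine ⟨binom_mem_Bset hw.symm, ?_⟩
      intro hmem
      rcases Set.mem_insert_iff.mp hmem with h | h
      · rw [hrep] at h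
        rcases binom_inj (Ne.symm hwu) h with ⟨h1', h2'⟩ | ⟨h1', h2'⟩ <;> simp_all
      · rw [Set.mem_singleton_iff, hrep, neg_binom] at h
        rcases binom_inj (Ne.symm hwu) h with ⟨h1', h2'⟩ | ⟨h1', h2'⟩ <;> simp_all
    have h2 : binom K w v ∈ Bset K A \ {f, -f} := by
      refine ⟨binom_mem_Bset (hw.trans hdeg), ?_⟩
      intro hmem
      rcases Set.mem_insert_iff.mp hmem with h | h
      · rw [hrep] at h
        rcases binom_inj hwv h with ⟨h1', h2'⟩ | ⟨h1', h2'⟩ <;> simp_all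
      · rw [Set.mem_singleton_iff, hrep, neg_binom] at h
        rcases binom_inj hwv h with ⟨h1', h2'⟩ | ⟨h1', h2'⟩ <;> simp_all
    exact Relation.EqvGen.trans _ _ _ (Relation.EqvGen.rel _ _ (rel_of_mem h1))
      (Relation.EqvGen.rel _ _ (rel_of_mem h2))
  · intro i
    by_contra hcon
    push_neg at hcon
    obtain ⟨hui, hvi⟩ := hcon
    apply not_conn_of_indisp hind hrep
    set c : Fin m →₀ ℕ := Finsupp.single i 1 with hc
    have hsingle : ∀ w : Fin m →₀ ℕ, w i ≠ 0 → c + (w - c) = w := by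
      intro w hwi
      ext j
      rcases eq_or_ne j i with rfl | hij
      · have hcj : c j = 1 := by simp [hc]
        simp only [Finsupp.add_apply, Finsupp.tsub_apply, hcj]
        omega
      · have hcj : c j = 0 := by simp [hc, Finsupp.single_apply, Ne.symm hij]
        simp only [Finsupp.add_apply, Finsupp.tsub_apply, hcj]
        omega
    have hu : c + (u - c) = u := hsingle u hui
    have hv : c + (v - c) = v := hsingle v hvi
    have hdeg' : degA A (u - c) = degA A (v - c) := by
      have h1 : degA A c + degA A (u - c) = degA A c + degA A (v - c) := by
        rw [← degA_add, ← degA_add, hu, hv]; exact hdeg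
      exact add_left_cancel h1
    have hne' : u - c ≠ v - c := by
      intro h
      apply huv
      rw [← hu, ← hv, h]
    have hci : c i = 1 := by simp [hc]
    have hadd : ∀ w w' : Fin m →₀ ℕ, c + w = w' → 1 + w i = w' i := by
      intro w w' h
      have := congrArg (fun g => g i) h
      simpa [Finsupp.add_apply, hci] using this
    have hucne : u - c ≠ u := by
      intro h
      have e1 := hadd _ _ hu
      have e2 : (u - c) i = u i := congrArg (fun g => g i) h
      omega
    have hvcne : v - c ≠ v := by
      intro h
      have e1 := hadd _ _ hv
      have e2 : (v - c) i = v i := congrArg (fun g => g i) h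
      omega
    have hcross : ¬ (u = v - c ∧ v = u - c) := by
      rintro ⟨h1', h2'⟩
      have h3 : c + u = v := by rw [h1']; exact hv
      have h4 : c + v = u := by rw [h2']; exact hu
      have e3 := hadd _ _ h3
      have e4 := hadd _ _ h4
      omega
    have hmem : binom K (u - c) (v - c) ∈ Bset K A \ {f, -f} := by
      refine ⟨binom_mem_Bset hdeg', ?_⟩
      intro hmem
      rcases Set.mem_insert_iff.mp hmem with h | h
      · rw [hrep] at h
        rcases binom_inj hne' h with ⟨h1', h2'⟩ | ⟨h1', h2'⟩
        · exact hucne h1'.symm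
        · exact hcross ⟨h1', h2'⟩
      · rw [Set.mem_singleton_iff, hrep, neg_binom] at h
        rcases binom_inj hne' h with ⟨h1', h2'⟩ | ⟨h1', h2'⟩
        · exact hcross ⟨h2', h1'⟩
        · exact hvcne h1'.symm
    exact Relation.EqvGen.rel _ _ ⟨c, u - c, v - c, hmem, hu.symm, hv.symm⟩



lemma pair_eq {u v p q : Fin m →₀ ℕ} (hp : p = u ∨ p = v) (hq : q = u ∨ q = v)
    (hpq : p ≠ q) : (p = u ∧ q = v) ∨ (p = v ∧ q = u) := by
  rcases hp with rfl | rfl <;> rcases hq with rfl | rfl <;> tauto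

lemma minGen_mem_indisp
    (hLHS : Ideal.span {g | IsIndispensableBinomial K A g} = toricIdeal K A)
    {S : Set (MvPolynomial (Fin m) K)} (hS : IsMinimalGenSet K A S)
    {f : MvPolynomial (Fin m) K} (hf : f ∈ S) : IsIndispensableBinomial K A f := by
  by_contra hnot
  obtain ⟨u, v, huv, hdeg, hrep⟩ := minGen_rep hS hf
  have hIndB : {g | IsIndispensableBinomial K A g} ⊆ Bset K A :=
    fun g hg => indisp_mem_Bset hg
  have hSB := minGen_subset_Bset hS
  have hconnInd : Relation.EqvGen (rel K {g | IsIndispensableBinomial K A g}) u v :=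
    gen_connect hIndB hLHS hdeg
  have step : ∀ p q, rel K {g | IsIndispensableBinomial K A g} p q →
      Relation.EqvGen (rel K (S \ {f})) p q := by
    rintro p q ⟨c, a, a', hmem, rfl, rfl⟩
    by_cases haa : a = a'
    · subst haa; exact Relation.EqvGen.refl _
    have hgind : IsIndispensableBinomial K A (binom K a a') := hmem
    have hdeg_a : degA A a = degA A a' := by
      obtain ⟨p₀, q₀, hne₀, hdeg₀, heq₀⟩ :=
        Bset_rep (indisp_mem_Bset hgind) (binom_ne_zero haa)
      rcases binom_inj haa heq₀ with ⟨h1, h2⟩ | ⟨h1, h2⟩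
      · rw [← h1, ← h2]; exact hdeg₀
      · rw [← h1, ← h2]; exact hdeg₀.symm
    obtain ⟨hfib, hgcd⟩ := indisp_fiber hgind rfl haa hdeg_a
    have hex : ∃ h ∈ S, h = binom K a a' ∨ h = binom K a' a := by
      by_contra hno
      push_neg at hno
      have hE3 : Equivalence (fun x y : Fin m →₀ ℕ =>
          degA A x = degA A y ∧ (degA A x = degA A a → x = y)) := by
        constructor
        · intro x; exact ⟨rfl, fun _ => rfl⟩
        · rintro x y ⟨h1, h2⟩
          exact ⟨h1.symm, fun hy => (h2 (h1.trans hy)).symm⟩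
        · rintro x y z ⟨h1, h2⟩ ⟨h3, h4⟩
          exact ⟨h1.trans h3, fun hx => (h2 hx).trans (h4 (h1.symm.trans hx ▸ rfl))⟩
      have hstep3 : ∀ x y, rel K S x y →
          degA A x = degA A y ∧ (degA A x = degA A a → x = y) := by
        intro x y hr
        rcases rel_decompose hSB hr with rfl | ⟨c', e, e', hne, hde, hmemS, rfl, rfl⟩
        · exact ⟨rfl, fun _ => rfl⟩
        refine ⟨by rw [degA_add, degA_add, hde], fun hdx => ?_⟩
        exfalso
        have hdy : degA A (c' + e') = degA A a := by
          rw [degA_add, ← hde, ← degA_add]; exact hdx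
        have hxm := hfib _ hdx
        have hym := hfib _ hdy
        have hxy : c' + e ≠ c' + e' := fun h => hne (add_left_cancel h)
        rcases pair_eq hxm hym hxy with ⟨hx, hy⟩ | ⟨hx, hy⟩ <;>
        · have hc0 : c' = 0 := by
            ext i
            simp only [Finsupp.coe_zero, Pi.zero_apply]
            have h1 : c' i ≤ (c' + e) i := by simp [Finsupp.add_apply]
            have h2 : c' i ≤ (c' + e') i := by simp [Finsupp.add_apply]
            rw [hx] at h1
            rw [hy] at h2
            rcases hgcd i with h | h <;> omega
          rw [hc0, zero_add] at hx hy
          subst hx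
          subst hy
          first
          | exact (hno _ hmemS).1 rfl
          | exact (hno _ hmemS).2 rfl
      have := eqv_invariant hE3 hstep3 (gen_connect hSB hS.2.1 hdeg_a)
      exact haa (this.2 rfl)
    obtain ⟨h, hhS, hcase⟩ := hex
    have hhf : h ≠ f := by
      rintro rfl
      rcases hcase with rfl | rfl
      · exact hnot hgind
      · refine hnot ?_
        have := indisp_neg hgind
        rwa [neg_binom] at this
    have hmem' : h ∈ S \ {f} := ⟨hhS, hhf⟩
    rcases hcase with rfl | rfl
    · exact eqv_translate c (Relation.EqvGen.rel _ _ (rel_of_mem hmem'))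
    · exact eqv_translate c
        (Relation.EqvGen.symm _ _ (Relation.EqvGen.rel _ _ (rel_of_mem hmem')))
  have hconnSf : Relation.EqvGen (rel K (S \ {f})) u v :=
    eqv_invariant (Relation.EqvGen.is_equivalence _) step hconnInd
  set D := S \ {f} with hD
  have hfspan : f ∈ Ideal.span D := by rw [hrep]; exact master_easy hconnSf
  have hspanD : Ideal.span D = toricIdeal K A := by
    refine le_antisymm (span_le_toric (fun g hg => hSB (Set.diff_subset hg))) ?_
    rw [← hS.2.1]
    apply Ideal.span_le.mpr
    intro g hg
    by_cases hgf : g = f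
    · subst hgf; exact hfspan
    · exact Ideal.subset_span ⟨hg, hgf⟩
  exact hS.2.2 D (Set.sdiff_singleton_ssubset.mpr hf) hspanD

lemma betti_structure
    (hLHS : Ideal.span {g | IsIndispensableBinomial K A g} = toricIdeal K A)
    {b : Fin n → ℤ} (hBetti : IsBettiDegree K A b) :
    ∃ u v : Fin m →₀ ℕ, u ≠ v ∧ degA A u = b ∧ degA A v = b ∧
      (∀ w, degA A w = b → w = u ∨ w = v) ∧ (∀ i, u i = 0 ∨ v i = 0) := by
  obtain ⟨S, hS, u, v, hdu, hdv, hmem⟩ := hBetti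
  have hfS : binom K u v ∈ S := hmem
  have huv : u ≠ v := by
    rintro rfl
    exact zero_not_mem_minGen hS (binom_self (K := K) u ▸ hfS)
  have hdeg : degA A u = degA A v := hdu.trans hdv.symm
  have hind := minGen_mem_indisp hLHS hS hfS
  obtain ⟨hfib, hgcd⟩ := indisp_fiber hind rfl huv hdeg
  exact ⟨u, v, huv, hdu, hdv, fun w hw => hfib w (by rw [hdu]; exact hw), hgcd⟩



/-- If the fiber of `b` is `{u,v}` with disjoint supports, then any binomial set avoiding
`±(x^u - x^v)` cannot connect two distinct points of the fiber. -/
lemma rigid_connect {S : Set (MvPolynomial (Fin m) K)} (hSB : S ⊆ Bset K A)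
    {u v : Fin m →₀ ℕ} {b : Fin n → ℤ}
    (hfib : ∀ w, degA A w = b → w = u ∨ w = v) (hgcd : ∀ i, u i = 0 ∨ v i = 0)
    (hno : ∀ h ∈ S, h ≠ binom K u v ∧ h ≠ binom K v u) :
    ∀ p q, Relation.EqvGen (rel K S) p q → degA A p = degA A q ∧ (degA A p = b → p = q) := by
  intro p q hpq
  have hE : Equivalence (fun x y : Fin m →₀ ℕ =>
      degA A x = degA A y ∧ (degA A x = b → x = y)) := by
    constructor
    · intro x; exact ⟨rfl, fun _ => rfl⟩
    · rintro x y ⟨h1, h2⟩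
      exact ⟨h1.symm, fun hy => (h2 (h1.trans hy)).symm⟩
    · rintro x y z ⟨h1, h2⟩ ⟨h3, h4⟩
      exact ⟨h1.trans h3, fun hx => (h2 hx).trans (h4 (h1.symm.trans hx ▸ rfl))⟩
  refine eqv_invariant hE ?_ hpq
  intro x y hr
  rcases rel_decompose hSB hr with rfl | ⟨c', e, e', hne, hde, hmemS, rfl, rfl⟩
  · exact ⟨rfl, fun _ => rfl⟩
  refine ⟨by rw [degA_add, degA_add, hde], fun hdx => ?_⟩
  exfalso
  have hdy : degA A (c' + e') = b := by
    rw [degA_add, ← hde, ← degA_add]; exact hdx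
  have hxm := hfib _ hdx
  have hym := hfib _ hdy
  have hxy : c' + e ≠ c' + e' := fun h => hne (add_left_cancel h)
  rcases pair_eq hxm hym hxy with ⟨hx, hy⟩ | ⟨hx, hy⟩ <;>
  · have hc0 : c' = 0 := by
      ext i
      simp only [Finsupp.coe_zero, Pi.zero_apply]
      have h1 : c' i ≤ (c' + e) i := by simp [Finsupp.add_apply]
      have h2 : c' i ≤ (c' + e') i := by simp [Finsupp.add_apply]
      rw [hx] at h1
      rw [hy] at h2
      rcases hgcd i with h | h <;> omega
    rw [hc0, zero_add] at hx hy
    subst hx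
    subst hy
    first
    | exact (hno _ hmemS).1 rfl
    | exact (hno _ hmemS).2 rfl

lemma dirA (hLHS : Ideal.span {g | IsIndispensableBinomial K A g} = toricIdeal K A)
    {b : Fin n → ℤ} (hBetti : IsBettiDegree K A b) : IsMinimalBinomialDegree A b := by
  obtain ⟨u, v, huv, hdu, hdv, hfib, hgcd⟩ := betti_structure hLHS hBetti
  refine ⟨⟨u, v, huv, hdu, hdv⟩, ?_⟩
  rintro c ⟨a, a', hne, hda, hda'⟩ ⟨⟨e, ⟨hw, hdw⟩, hbce⟩, hcb⟩
  have hp : degA A (hw + a) = b := by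
    rw [degA_add, hdw, hda, hbce]; exact add_comm e c
  have hq : degA A (hw + a') = b := by
    rw [degA_add, hdw, hda', hbce]; exact add_comm e c
  have hne2 : hw + a ≠ hw + a' := fun h => hne (add_left_cancel h)
  have hw0 : hw = 0 := by
    rcases pair_eq (hfib _ hp) (hfib _ hq) hne2 with ⟨h1, h2⟩ | ⟨h1, h2⟩ <;>
    · ext i
      simp only [Finsupp.coe_zero, Pi.zero_apply]
      have e1 : hw i ≤ (hw + a) i := by simp [Finsupp.add_apply]
      have e2 : hw i ≤ (hw + a') i := by simp [Finsupp.add_apply]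
      rw [h1] at e1
      rw [h2] at e2
      rcases hgcd i with h | h <;> omega
  refine hcb ?_
  rw [hbce, ← hdw, hw0, degA_zero, add_zero]

lemma dirB (hLHS : Ideal.span {g | IsIndispensableBinomial K A g} = toricIdeal K A)
    {S' : Set (MvPolynomial (Fin m) K)} (hS' : IsMinimalGenSet K A S')
    {b : Fin n → ℤ} (hBetti : IsBettiDegree K A b) : betti0 K A S' b = 1 := by
  obtain ⟨u, v, huv, hdu, hdv, hfib, hgcd⟩ := betti_structure hLHS hBetti
  have hS'B := minGen_subset_Bset hS'
  have hdeg : degA A u = degA A v := hdu.trans hdv.symm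
  -- existence of a generator of degree b in S'
  have hex : ∃ h ∈ S', h = binom K u v ∨ h = binom K v u := by
    by_contra hno
    push_neg at hno
    have := (rigid_connect hS'B hfib hgcd hno u v
      (gen_connect hS'B hS'.2.1 hdeg)).2 hdu
    exact huv this
  obtain ⟨h, hhS', hcase⟩ := hex
  -- any element of the counted set is `± (x^u - x^v)`
  have hclass : ∀ g ∈ S', ∀ p q : Fin m →₀ ℕ, degA A p = b → degA A q = b →
      g = binom K p q → g = binom K u v ∨ g = binom K v u := by
    intro g hgS p q hdp hdq hgrep
    have hpq : p ≠ q := by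
      rintro rfl
      rw [binom_self] at hgrep
      exact zero_not_mem_minGen hS' (hgrep ▸ hgS)
    rcases pair_eq (hfib p hdp) (hfib q hdq) hpq with ⟨h1, h2⟩ | ⟨h1, h2⟩
    · subst h1; subst h2; exact Or.inl hgrep
    · subst h1; subst h2; exact Or.inr hgrep
  have huniq : ∀ g ∈ {f ∈ S' | ∃ u' v' : Fin m →₀ ℕ, degA A u' = b ∧ degA A v' = b ∧
      f = monomial u' (1 : K) - monomial v' 1}, g = h := by
    rintro g ⟨hgS, p, q, hdp, hdq, hgrep⟩
    have hg2 := hclass g hgS p q hdp hdq hgrep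
    have hh2 : h = binom K u v ∨ h = binom K v u := hcase
    by_contra hgh
    -- then {g, h} = {binom u v, binom v u} and h = -g
    have hgneg : h = -g := by
      rcases hg2 with rfl | rfl <;> rcases hh2 with rfl | rfl
      · exact absurd rfl hgh
      · rw [neg_binom]
      · rw [neg_binom]
      · exact absurd rfl hgh
    have hspanD : Ideal.span (S' \ {h}) = toricIdeal K A := by
      refine le_antisymm (span_le_toric (fun x hx => hS'B (Set.diff_subset hx))) ?_
      rw [← hS'.2.1]
      apply Ideal.span_le.mpr
      intro x hx
      by_cases hxh : x = h
      · subst hxh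
        rw [hgneg]
        exact neg_mem (Ideal.subset_span ⟨hgS, fun hg => hgh ((Set.mem_singleton_iff.mp hg).trans hgneg.symm)⟩)
      · exact Ideal.subset_span ⟨hx, hxh⟩
    exact hS'.2.2 _ (Set.sdiff_singleton_ssubset.mpr hhS') hspanD
  have hmemCS : h ∈ {f ∈ S' | ∃ u' v' : Fin m →₀ ℕ, degA A u' = b ∧ degA A v' = b ∧
      f = monomial u' (1 : K) - monomial v' 1} := by
    rcases hcase with rfl | rfl
    · exact ⟨hhS', u, v, hdu, hdv, rfl⟩
    · exact ⟨hhS', v, u, hdv, hdu, rfl⟩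
  exact Set.ncard_eq_one.mpr ⟨h, Set.eq_singleton_iff_unique_mem.mpr ⟨hmemCS, huniq⟩⟩



lemma binom_deg_of_mem {e e' : Fin m →₀ ℕ} (h : binom K e e' ∈ Bset K A) (hne : e ≠ e') :
    degA A e = degA A e' := by
  obtain ⟨p₀, q₀, hdeg₀, heq₀⟩ := h
  rcases binom_inj hne heq₀ with ⟨h1, h2⟩ | ⟨h1, h2⟩
  · rw [← h1, ← h2]; exact hdeg₀
  · rw [← h1, ← h2]; exact hdeg₀.symm

lemma min_deg_edge {b : Fin n → ℤ} (hmin : IsMinimalBinomialDegree A b) (hb0 : b ≠ 0)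
    (hbNA : inNA A b) {c a a' : Fin m →₀ ℕ} (hne : a ≠ a')
    (hd : degA A a = degA A a') (hdb : degA A (c + a) = b) :
    degA A a = b ∧ c = 0 := by
  have hda : degA A c + degA A a = b := by rw [← degA_add]; exact hdb
  have hdab : degA A a = b := by
    by_contra hne2
    exact hmin.2 (degA A a) ⟨a, a', hne, rfl, hd.symm⟩
      ⟨⟨degA A c, ⟨c, rfl⟩, by rw [← hda, add_comm]⟩, hne2⟩
  have hdc0 : degA A c = 0 := by
    have h := hda
    rw [hdab] at h
    exact add_eq_right.mp h
  refine ⟨hdab, ?_⟩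
  by_contra hcne
  have hbin0 : IsBinomialDegree A (0 : Fin n → ℤ) := ⟨c, 0, hcne, hdc0, degA_zero⟩
  exact hmin.2 0 hbin0 ⟨⟨b, hbNA, (zero_add b).symm⟩, fun h => hb0 h.symm⟩

lemma minGen_elt_indisp_of_rhs (hA : IsPointed A)
    (ha : ∀ b : Fin n → ℤ, IsBettiDegree K A b → IsMinimalBinomialDegree A b)
    (hbb : ∀ S, IsMinimalGenSet K A S →
      ∀ b : Fin n → ℤ, IsBettiDegree K A b → betti0 K A S b = 1)
    {S₀ : Set (MvPolynomial (Fin m) K)} (hS₀ : IsMinimalGenSet K A S₀)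
    {f : MvPolynomial (Fin m) K} (hf : f ∈ S₀) : IsIndispensableBinomial K A f := by
  obtain ⟨u, v, huv, hdeg, hrep⟩ := minGen_rep hS₀ hf
  have hS₀B := minGen_subset_Bset hS₀
  set b := degA A u with hbdef
  have hfS : binom K u v ∈ S₀ := by rw [← hrep]; exact hf
  have hBetti : IsBettiDegree K A b := ⟨S₀, hS₀, u, v, rfl, hdeg.symm, hfS⟩
  have hmin := ha b hBetti
  have hcnt := hbb S₀ hS₀ b hBetti
  have hcountset : {g ∈ S₀ | ∃ u' v' : Fin m →₀ ℕ, degA A u' = b ∧ degA A v' = b ∧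
      g = monomial u' (1 : K) - monomial v' 1} = {f} := by
    obtain ⟨x, hx⟩ := Set.ncard_eq_one.mp hcnt
    have hfmem : f ∈ {g ∈ S₀ | ∃ u' v' : Fin m →₀ ℕ, degA A u' = b ∧ degA A v' = b ∧
        g = monomial u' (1 : K) - monomial v' 1} := ⟨hf, u, v, rfl, hdeg.symm, hrep⟩
    rw [hx] at hfmem ⊢
    rw [Set.mem_singleton_iff] at hfmem
    rw [hfmem]
  by_cases hb0 : b = (0 : Fin n → ℤ)
  · exfalso
    have hdu0 : degA A u = 0 := hb0
    have hdv0 : degA A v = 0 := by rw [← hdeg]; exact hb0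
    have huv0 : u = 0 ∨ v = 0 := by
      by_contra hcon
      push_neg at hcon
      obtain ⟨hu0, hv0⟩ := hcon
      have hE6 : Equivalence (fun x y : Fin m →₀ ℕ => degA A x = degA A y ∧
          (degA A x = 0 → (x = 0 ↔ y = 0))) := by
        constructor
        · intro x; exact ⟨rfl, fun _ => Iff.rfl⟩
        · rintro x y ⟨h1, h2⟩
          exact ⟨h1.symm, fun hy => (h2 (h1.trans hy)).symm⟩
        · rintro x y z ⟨h1, h2⟩ ⟨h3, h4⟩
          exact ⟨h1.trans h3, fun hx => (h2 hx).trans (h4 (by rw [← h1]; exact hx))⟩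
      have hstep6 : ∀ x y, rel K S₀ x y → degA A x = degA A y ∧
          (degA A x = 0 → (x = 0 ↔ y = 0)) := by
        intro x y hr
        rcases rel_decompose hS₀B hr with rfl | ⟨c, e, e', hne, hde, hmemS, rfl, rfl⟩
        · exact ⟨rfl, fun _ => Iff.rfl⟩
        refine ⟨by rw [degA_add, degA_add, hde], fun hdx => ?_⟩
        have hdc : degA A c = 0 := hA c e (by rw [← degA_add]; exact hdx)
        have hde0 : degA A e = 0 := by
          have h' := hdx
          rw [degA_add, hdc, zero_add] at h'
          exact h'
        have hde0' : degA A e' = 0 := hde ▸ hde0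
        have hmemCS : binom K e e' ∈ {g ∈ S₀ | ∃ u' v' : Fin m →₀ ℕ, degA A u' = b ∧
            degA A v' = b ∧ g = monomial u' (1 : K) - monomial v' 1} :=
          ⟨hmemS, e, e', by rw [hb0]; exact hde0, by rw [hb0]; exact hde0', rfl⟩
        rw [hcountset, Set.mem_singleton_iff, hrep] at hmemCS
        have hpair := binom_inj hne hmemCS
        have hadd0 : ∀ c' e₀ : Fin m →₀ ℕ, c' + e₀ = 0 → e₀ = 0 := by
          intro c' e₀ h0
          ext j
          have := congrArg (fun g => g j) h0
          simp only [Finsupp.add_apply, Finsupp.coe_zero, Pi.zero_apply] at this ⊢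
          omega
        have hxne : c + e ≠ 0 := by
          intro h0
          have he0 := hadd0 _ _ h0
          rcases hpair with ⟨h1, _⟩ | ⟨_, h2⟩
          · exact hu0 (h1.trans he0)
          · exact hv0 (h2.trans he0)
        have hyne : c + e' ≠ 0 := by
          intro h0
          have he0 := hadd0 _ _ h0
          rcases hpair with ⟨_, h2⟩ | ⟨h1, _⟩
          · exact hv0 (h2.trans he0)
          · exact hu0 (h1.trans he0)
        exact iff_of_false hxne hyne
      have hconn := gen_connect hS₀B hS₀.2.1
        (show degA A (0 : Fin m →₀ ℕ) = degA A u from degA_zero.trans hdu0.symm)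
      have := (eqv_invariant hE6 hstep6 hconn).2 degA_zero
      exact hu0 (this.mp rfl)
    obtain ⟨w, hw0, hdw, hfw⟩ : ∃ w : Fin m →₀ ℕ, w ≠ 0 ∧ degA A w = 0 ∧
        (f = binom K w 0 ∨ f = binom K 0 w) := by
      rcases huv0 with rfl | rfl
      · exact ⟨v, Ne.symm huv, hdv0, Or.inr hrep⟩
      · exact ⟨u, huv, hdu0, Or.inl hrep⟩
    obtain ⟨i₀, hi₀⟩ : ∃ i, w i ≠ 0 := by
      by_contra hc
      push_neg at hc
      exact hw0 (by ext i; simpa using hc i)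
    set g2 : MvPolynomial (Fin m) K := binom K (w + w) 0 with hg2def
    set g3 : MvPolynomial (Fin m) K := binom K (w + w + w) 0 with hg3def
    have hd2 : degA A (w + w) = 0 := by rw [degA_add, hdw, add_zero]
    have hd3 : degA A (w + w + w) = 0 := by rw [degA_add, hd2, hdw, add_zero]
    set S₁ := (S₀ \ {f}) ∪ {g2, g3} with hS₁def
    have hS₁B : S₁ ⊆ Bset K A := by
      rintro x (⟨hx, _⟩ | hx)
      · exact hS₀B hx
      · simp only [Set.mem_insert_iff, Set.mem_singleton_iff] at hx
        rcases hx with rfl | rfl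
        · exact binom_mem_Bset (by rw [hd2, degA_zero])
        · exact binom_mem_Bset (by rw [hd3, degA_zero])
    have hg2S₁ : g2 ∈ S₁ := Set.mem_union_right _ (Set.mem_insert _ _)
    have hg3S₁ : g3 ∈ S₁ := Set.mem_union_right _ (Set.mem_insert_iff.mpr (Or.inr rfl))
    have hkey : binom K w 0 = g3 - monomial w (1:K) * g2 := by
      have h1 : monomial w (1:K) * g2 = monomial (w+w+w) 1 - monomial w 1 := by
        rw [hg2def]
        show monomial w (1:K) * (monomial (w+w) 1 - monomial 0 1) = _
        rw [mul_sub, monomial_mul, monomial_mul, mul_one, add_zero,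
          show w + (w + w) = w + w + w from (add_assoc w w w).symm]
      rw [h1, hg3def]
      show monomial w (1:K) - monomial 0 1 =
        (monomial (w+w+w) (1:K) - monomial 0 1) - (monomial (w+w+w) (1:K) - monomial w 1)
      ring
    have hfspan1 : binom K w 0 ∈ Ideal.span S₁ := by
      rw [hkey]
      exact sub_mem (Ideal.subset_span hg3S₁)
        (Ideal.mul_mem_left _ _ (Ideal.subset_span hg2S₁))
    have hspan1 : Ideal.span S₁ = toricIdeal K A := by
      refine le_antisymm (span_le_toric hS₁B) ?_
      rw [← hS₀.2.1]
      apply Ideal.span_le.mpr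
      intro x hx
      by_cases hxf : x = f
      · subst hxf
        rcases hfw with hh | hh
        · rw [hh]; exact hfspan1
        · rw [hh, ← neg_binom]; exact neg_mem hfspan1
      · exact Ideal.subset_span (Or.inl ⟨hx, hxf⟩)
    have hS₁fin : S₁.Finite := ((minGen_finite hS₀).diff).union (Set.toFinite _)
    obtain ⟨S₂, hS₂sub, hS₂⟩ := exists_minGen_subset S₁.ncard S₁ hS₁fin le_rfl hS₁B hspan1
    have hS₂B := minGen_subset_Bset hS₂
    have happly : ∀ (p q : Fin m →₀ ℕ), p = q → p i₀ = q i₀ :=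
      fun p q h => congrArg (fun g => g i₀) h
    have hwwne : w + w ≠ w := by
      intro h
      have := happly _ _ h
      simp only [Finsupp.add_apply] at this
      omega
    have hww0 : w + w ≠ 0 := by
      intro h
      have := happly _ _ h
      simp only [Finsupp.add_apply, Finsupp.coe_zero, Pi.zero_apply] at this
      omega
    have hwww0 : w + w + w ≠ 0 := by
      intro h
      have := happly _ _ h
      simp only [Finsupp.add_apply, Finsupp.coe_zero, Pi.zero_apply] at this
      omega
    have hwwwne2 : w + w + w ≠ w + w := by
      intro h
      have := happly _ _ h
      simp only [Finsupp.add_apply] at this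
      omega
    have hwwwne : w + w + w ≠ w := by
      intro h
      have := happly _ _ h
      simp only [Finsupp.add_apply] at this
      omega
    have hfne2 : f ≠ g2 := by
      intro h
      rw [hg2def] at h
      rcases hfw with hh | hh <;> rw [hh] at h
      · rcases binom_inj hw0 h with ⟨h1, _⟩ | ⟨h1, _⟩
        · exact hwwne h1
        · exact hww0 h1
      · rcases binom_inj (Ne.symm hw0) h with ⟨h1, _⟩ | ⟨h1, _⟩
        · exact hww0 h1
        · exact hwwne h1
    have hfne3 : f ≠ g3 := by
      intro h
      rw [hg3def] at h
      rcases hfw with hh | hh <;> rw [hh] at h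
      · rcases binom_inj hw0 h with ⟨h1, _⟩ | ⟨h1, _⟩
        · exact hwwwne h1
        · exact hwww0 h1
      · rcases binom_inj (Ne.symm hw0) h with ⟨h1, _⟩ | ⟨h1, _⟩
        · exact hwww0 h1
        · exact hwwwne h1
    have hg2ne3 : g2 ≠ g3 := by
      intro h
      rw [hg2def, hg3def] at h
      rcases binom_inj hww0 h with ⟨h1, _⟩ | ⟨h1, _⟩
      · exact hwwwne2 h1
      · exact hwww0 h1
    have honly : ∀ h ∈ S₂, ∀ e e' : Fin m →₀ ℕ, e ≠ e' → degA A e = 0 →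
        h = binom K e e' → h = g2 ∨ h = g3 := by
      intro h hh e e' hne hde0 hrep'
      rcases hS₂sub hh with ⟨hhS₀, hhf⟩ | hpair
      · exfalso
        have hbb' : degA A e = degA A e' :=
          binom_deg_of_mem (hrep' ▸ hS₀B hhS₀) hne
        have hde0' : degA A e' = 0 := by rw [← hbb']; exact hde0
        have hmemCS : h ∈ {g ∈ S₀ | ∃ u' v' : Fin m →₀ ℕ, degA A u' = b ∧
            degA A v' = b ∧ g = monomial u' (1 : K) - monomial v' 1} :=
          ⟨hhS₀, e, e', by rw [hb0]; exact hde0, by rw [hb0]; exact hde0', hrep'⟩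
        rw [hcountset] at hmemCS
        exact hhf hmemCS
      · simpa only [Set.mem_insert_iff, Set.mem_singleton_iff] using hpair
    have hdvd : ∀ kw : Fin m →₀ ℕ,
        (∀ h ∈ S₂, ∀ e e' : Fin m →₀ ℕ, e ≠ e' → degA A e = 0 → h = binom K e e' →
          (e = kw ∧ e' = 0) ∨ (e = 0 ∧ e' = kw)) → kw i₀ ∣ w i₀ := by
      intro kw honly'
      have hE7 : Equivalence (fun x y : Fin m →₀ ℕ => degA A x = degA A y ∧
          (degA A x = 0 → x i₀ ≡ y i₀ [MOD kw i₀])) := by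
        constructor
        · intro x; exact ⟨rfl, fun _ => Nat.ModEq.refl _⟩
        · rintro x y ⟨h1, h2⟩
          exact ⟨h1.symm, fun hy => (h2 (h1.trans hy)).symm⟩
        · rintro x y z ⟨h1, h2⟩ ⟨h3, h4⟩
          exact ⟨h1.trans h3, fun hx => (h2 hx).trans (h4 (by rw [← h1]; exact hx))⟩
      have hstep7 : ∀ x y, rel K S₂ x y → degA A x = degA A y ∧
          (degA A x = 0 → x i₀ ≡ y i₀ [MOD kw i₀]) := by
        intro x y hr
        rcases rel_decompose hS₂B hr with rfl | ⟨c, e, e', hne, hde, hmemS, rfl, rfl⟩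
        · exact ⟨rfl, fun _ => Nat.ModEq.refl _⟩
        refine ⟨by rw [degA_add, degA_add, hde], fun hdx => ?_⟩
        have hdc : degA A c = 0 := hA c e (by rw [← degA_add]; exact hdx)
        have hde0 : degA A e = 0 := by
          have h' := hdx
          rw [degA_add, hdc, zero_add] at h'
          exact h'
        rcases honly' _ hmemS e e' hne hde0 rfl with ⟨heq, rfl⟩ | ⟨rfl, heq⟩
        · rw [heq]
          show (c + kw) i₀ ≡ (c + 0) i₀ [MOD kw i₀]
          simp only [Finsupp.add_apply, Finsupp.coe_zero, Pi.zero_apply, add_zero]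
          exact Nat.add_mod_right _ _
        · rw [heq]
          show (c + 0) i₀ ≡ (c + kw) i₀ [MOD kw i₀]
          simp only [Finsupp.add_apply, Finsupp.coe_zero, Pi.zero_apply, add_zero]
          exact (Nat.add_mod_right _ _).symm
      have hconn := gen_connect hS₂B hS₂.2.1
        (show degA A w = degA A (0 : Fin m →₀ ℕ) from by rw [hdw, degA_zero])
      have hmod := (eqv_invariant hE7 hstep7 hconn).2 hdw
      have hmod' : w i₀ ≡ 0 [MOD kw i₀] := by simpa using hmod
      exact Nat.modEq_zero_iff_dvd.mp hmod'
    have hg2S₂ : g2 ∈ S₂ := by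
      by_contra hg2n
      have hdd := hdvd (w + w + w) ?_
      · have h1 : (w + w + w) i₀ = w i₀ + w i₀ + w i₀ := by
          simp [Finsupp.add_apply]
        rw [h1] at hdd
        have := Nat.le_of_dvd (Nat.pos_of_ne_zero hi₀) hdd
        omega
      · intro h hh e e' hne hde0 hrep'
        rcases honly h hh e e' hne hde0 hrep' with hg | hg
        · exact absurd (hg ▸ hh) hg2n
        · have heq : binom K e e' = binom K (w + w + w) 0 := by
            rw [← hrep', hg, hg3def]
          rcases binom_inj hne heq with ⟨h1, h2⟩ | ⟨h1, h2⟩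
          · exact Or.inl ⟨h1.symm, h2.symm⟩
          · exact Or.inr ⟨h2.symm, h1.symm⟩
    have hg3S₂ : g3 ∈ S₂ := by
      by_contra hg3n
      have hdd := hdvd (w + w) ?_
      · have h1 : (w + w) i₀ = w i₀ + w i₀ := by
          simp [Finsupp.add_apply]
        rw [h1] at hdd
        have := Nat.le_of_dvd (Nat.pos_of_ne_zero hi₀) hdd
        omega
      · intro h hh e e' hne hde0 hrep'
        rcases honly h hh e e' hne hde0 hrep' with hg | hg
        · have heq : binom K e e' = binom K (w + w) 0 := by
            rw [← hrep', hg, hg2def]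
          rcases binom_inj hne heq with ⟨h1, h2⟩ | ⟨h1, h2⟩
          · exact Or.inl ⟨h1.symm, h2.symm⟩
          · exact Or.inr ⟨h2.symm, h1.symm⟩
        · exact absurd (hg ▸ hh) hg3n
    have hBetti0 : IsBettiDegree K A (0 : Fin n → ℤ) :=
      ⟨S₂, hS₂, w + w, 0, hd2, degA_zero, hg2S₂⟩
    have hcnt2 := hbb S₂ hS₂ 0 hBetti0
    have hsub2 : ({g2, g3} : Set (MvPolynomial (Fin m) K)) ⊆
        {g ∈ S₂ | ∃ u' v' : Fin m →₀ ℕ, degA A u' = 0 ∧ degA A v' = 0 ∧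
          g = monomial u' (1 : K) - monomial v' 1} := by
      rintro x (rfl | rfl)
      · exact ⟨hg2S₂, w + w, 0, hd2, degA_zero, hg2def⟩
      · exact ⟨hg3S₂, w + w + w, 0, hd3, degA_zero, hg3def⟩
    have hfin2 : {g ∈ S₂ | ∃ u' v' : Fin m →₀ ℕ, degA A u' = 0 ∧ degA A v' = 0 ∧
        g = monomial u' (1 : K) - monomial v' 1}.Finite :=
      (minGen_finite hS₂).subset (Set.sep_subset _ _)
    have h2le := Set.ncard_le_ncard hsub2 hfin2
    rw [Set.ncard_pair hg2ne3] at h2le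
    have hcontra : (2 : ℕ) ≤ 1 := le_trans h2le (le_of_eq hcnt2)
    omega
  · -- main case b ≠ 0
    have hbNA : inNA A b := ⟨u, rfl⟩
    -- the fiber of b is {u, v}
    have hfibsub : ∀ p, degA A p = b → p = u ∨ p = v := by
      have hE : Equivalence (fun x y : Fin m →₀ ℕ => degA A x = degA A y ∧
          (degA A x = b → ((x = u ∨ x = v) ↔ (y = u ∨ y = v)))) := by
        constructor
        · intro x; exact ⟨rfl, fun _ => Iff.rfl⟩
        · rintro x y ⟨h1, h2⟩
          exact ⟨h1.symm, fun hy => (h2 (h1.trans hy)).symm⟩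
        · rintro x y z ⟨h1, h2⟩ ⟨h3, h4⟩
          exact ⟨h1.trans h3, fun hx => (h2 hx).trans (h4 (h1.symm.trans hx ▸ rfl))⟩
      have hstep : ∀ x y, rel K S₀ x y → degA A x = degA A y ∧
          (degA A x = b → ((x = u ∨ x = v) ↔ (y = u ∨ y = v))) := by
        intro x y hr
        rcases rel_decompose hS₀B hr with rfl | ⟨c, e, e', hne, hde, hmemS, rfl, rfl⟩
        · exact ⟨rfl, fun _ => Iff.rfl⟩
        refine ⟨by rw [degA_add, degA_add, hde], fun hdx => ?_⟩
        obtain ⟨hdeb, hc0⟩ := min_deg_edge hmin hb0 hbNA hne hde hdx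
        subst hc0
        simp only [zero_add]
        have hmemCS : binom K e e' ∈ {g ∈ S₀ | ∃ u' v' : Fin m →₀ ℕ, degA A u' = b ∧
            degA A v' = b ∧ g = monomial u' (1 : K) - monomial v' 1} :=
          ⟨hmemS, e, e', hdeb, hde ▸ hdeb, rfl⟩
        rw [hcountset, Set.mem_singleton_iff, hrep] at hmemCS
        rcases binom_inj hne hmemCS with ⟨h1, h2⟩ | ⟨h1, h2⟩
        · constructor
          · intro _; exact Or.inr h2.symm
          · intro _; exact Or.inl h1.symm
        · constructor
          · intro _; exact Or.inl h1.symm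
          · intro _; exact Or.inr h2.symm
      intro p hp
      have := (eqv_invariant hE hstep
        (gen_connect hS₀B hS₀.2.1 (show degA A p = degA A u from hp))).2 hp
      exact this.mpr (Or.inl rfl)
    -- indispensability
    refine ⟨by rw [hrep]; exact Bset_subset_toric (binom_mem_Bset hdeg), ?_⟩
    intro T hTB hTspan
    by_contra hno
    push_neg at hno
    obtain ⟨hfT, hnfT⟩ := hno
    have hTB' : T ⊆ Bset K A := hTB
    have hE5 : Equivalence (fun x y : Fin m →₀ ℕ => degA A x = degA A y ∧
        (degA A x = b → x = y)) := by
      constructor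
      · intro x; exact ⟨rfl, fun _ => rfl⟩
      · rintro x y ⟨h1, h2⟩
        exact ⟨h1.symm, fun hy => (h2 (h1.trans hy)).symm⟩
      · rintro x y z ⟨h1, h2⟩ ⟨h3, h4⟩
        exact ⟨h1.trans h3, fun hx => (h2 hx).trans (h4 (h1.symm.trans hx ▸ rfl))⟩
    have hstepT : ∀ x y, rel K T x y → degA A x = degA A y ∧ (degA A x = b → x = y) := by
      intro x y hr
      rcases rel_decompose hTB' hr with rfl | ⟨c, e, e', hne, hde, hmemT, rfl, rfl⟩
      · exact ⟨rfl, fun _ => rfl⟩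
      refine ⟨by rw [degA_add, degA_add, hde], fun hdx => ?_⟩
      exfalso
      obtain ⟨hdeb, hc0⟩ := min_deg_edge hmin hb0 hbNA hne hde hdx
      have hde' : degA A e' = b := hde ▸ hdeb
      rcases pair_eq (hfibsub e hdeb) (hfibsub e' hde') hne with ⟨h1, h2⟩ | ⟨h1, h2⟩
      · subst h1; subst h2
        exact hfT (by rw [hrep]; exact hmemT)
      · subst h1; subst h2
        apply hnfT
        rw [hrep, neg_binom]
        exact hmemT
    have := (eqv_invariant hE5 hstepT (gen_connect hTB' hTspan hdeg)).2 rfl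
    exact huv this

end St12

/-- `I_A` is generated by its indispensable binomials if and only if every Betti
`A`-degree is a minimal binomial `A`-degree and all `A`-graded Betti numbers
equal `1`. -/
theorem statement12 {K : Type*} [Field K] {m n : ℕ} (A : Fin m → Fin n → ℤ)
    (hA : IsPointed A) :
    Ideal.span {f | IsIndispensableBinomial K A f} = toricIdeal K A ↔
      ((∀ b : Fin n → ℤ, IsBettiDegree K A b → IsMinimalBinomialDegree A b) ∧
       ∀ S, IsMinimalGenSet K A S →
         ∀ b : Fin n → ℤ, IsBettiDegree K A b → betti0 K A S b = 1) := by
  constructor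
  · intro hLHS
    exact ⟨fun b hB => St12.dirA hLHS hB, fun S hS b hB => St12.dirB hLHS hS hB⟩
  · rintro ⟨ha, hbb⟩
    obtain ⟨S₀, hS₀⟩ := St12.exists_minGen (K := K) (A := A)
    refine le_antisymm (Ideal.span_le.mpr fun g hg => hg.1) ?_
    rw [← hS₀.2.1]
    exact Ideal.span_le.mpr fun g hg =>
      Ideal.subset_span (St12.minGen_elt_indisp_of_rhs hA ha hbb hS₀ hg)
end
end

section
/- If the toric ideal I_A is generated by its indispensable binomials, then every connected component of the indispensable complex Δ_ind(A) is a 1-simplex. -/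
open MvPolynomial

noncomputable section

section Aux

lemma coeff_binomial {K : Type*} [Field K] {m : ℕ} (w a a' : Fin m →₀ ℕ) :
    coeff w (monomial a (1 : K) - monomial a' 1) =
      (if a = w then (1:K) else 0) - (if a' = w then (1:K) else 0) := by
  simp [coeff_monomial]

/-- Extraction: if `f ∈ span S` and `coeff u f ≠ 0` then some generator has a
nonzero coefficient at an exponent dividing `u`. -/
lemma span_exists_le {K : Type*} [Field K] {m : ℕ} {S : Set (MvPolynomial (Fin m) K)}
    {f : MvPolynomial (Fin m) K} (hf : f ∈ Ideal.span S) :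
    ∀ u : Fin m →₀ ℕ, coeff u f ≠ 0 →
      ∃ g ∈ S, ∃ s : Fin m →₀ ℕ, (∀ i, s i ≤ u i) ∧ coeff s g ≠ 0 := by
  induction hf using Submodule.span_induction with
  | mem g hg => exact fun u hu => ⟨g, hg, u, fun i => le_rfl, hu⟩
  | zero => intro u hu; simp at hu
  | add p q hp hq ihp ihq =>
      intro u hu
      rw [coeff_add] at hu
      by_cases h : coeff u p = 0
      · exact ihq u (by intro h'; rw [h, h'] at hu; simp at hu)
      · exact ihp u h
  | smul r p hp ihp =>
      intro u hu
      rw [smul_eq_mul, coeff_mul] at hu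
      obtain ⟨⟨s, t⟩, hst, hne⟩ := Finset.exists_ne_zero_of_sum_ne_zero hu
      have ht : coeff t p ≠ 0 := right_ne_zero_of_mul hne
      obtain ⟨g, hg, s', hs', hcs⟩ := ihp t ht
      have hstu : s + t = u := Finset.HasAntidiagonal.mem_antidiagonal.mp hst
      refine ⟨g, hg, s', fun i => ?_, hcs⟩
      calc s' i ≤ t i := hs' i
        _ ≤ s i + t i := Nat.le_add_left _ _
        _ = (s + t) i := (Finsupp.add_apply s t i).symm
        _ = u i := by rw [hstu]

lemma indisp_neg {K : Type*} [Field K] {m n : ℕ} {A : Fin m → Fin n → ℤ}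
    {f : MvPolynomial (Fin m) K} (h : IsIndispensableBinomial K A f) :
    IsIndispensableBinomial K A (-f) := by
  refine ⟨neg_mem h.1, fun S hS hsp => ?_⟩
  rcases h.2 S hS hsp with h1 | h1
  · exact Or.inr (by rw [neg_neg]; exact h1)
  · exact Or.inl h1

/-- An indispensable binomial really is a nonzero binomial. -/
lemma indisp_form {K : Type*} [Field K] {m n : ℕ} (A : Fin m → Fin n → ℤ)
    {f : MvPolynomial (Fin m) K} (h : IsIndispensableBinomial K A f) :
    ∃ a a' : Fin m →₀ ℕ, a ≠ a' ∧ degA A a = degA A a' ∧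
      f = monomial a (1 : K) - monomial a' 1 := by
  classical
  set B : Set (MvPolynomial (Fin m) K) :=
    {f | ∃ u v : Fin m →₀ ℕ, degA A u = degA A v ∧
      f = monomial u (1 : K) - monomial v 1} with hBdef
  have hBspan : Ideal.span B = toricIdeal K A := rfl
  have hspan0 : Ideal.span (B \ {0}) = toricIdeal K A := by
    rw [← hBspan]
    apply le_antisymm (Ideal.span_mono Set.diff_subset)
    rw [Ideal.span_le]
    intro g hg
    by_cases h0 : g = 0
    · rw [h0]; exact zero_mem _
    · exact Ideal.subset_span ⟨hg, h0⟩
  have hbin : IsBinomialSet K A (B \ {0}) := fun g hg => hg.1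
  rcases h.2 (B \ {0}) hbin hspan0 with hf | hf
  · obtain ⟨⟨a, a', hd, hfe⟩, hne0⟩ := hf
    refine ⟨a, a', ?_, hd, hfe⟩
    rintro rfl
    exact hne0 (by rw [Set.mem_singleton_iff, hfe, sub_self])
  · obtain ⟨⟨a, a', hd, hfe⟩, hne0⟩ := hf
    have hne : a ≠ a' := by
      rintro rfl
      exact hne0 (by rw [Set.mem_singleton_iff, hfe, sub_self])
    refine ⟨a', a, Ne.symm hne, hd.symm, ?_⟩
    have hfeq : f = -(monomial a (1:K) - monomial a' 1) := by rw [← hfe, neg_neg]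
    rw [hfeq, neg_sub]

/-- The fiber of the degree of an indispensable binomial has exactly two
elements. -/
lemma fiber_two {K : Type*} [Field K] {m n : ℕ} (A : Fin m → Fin n → ℤ)
    {u v : Fin m →₀ ℕ} (huv : u ≠ v) (hdeg : degA A u = degA A v)
    (hind : IsIndispensableBinomial K A (monomial u 1 - monomial v 1)) :
    ∀ w, degA A w = degA A u → w = u ∨ w = v := by
  classical
  intro w hw
  by_contra hc
  push_neg at hc
  obtain ⟨hwu, hwv⟩ := hc
  set f : MvPolynomial (Fin m) K := monomial u 1 - monomial v 1 with hfdef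
  set B : Set (MvPolynomial (Fin m) K) :=
    {f | ∃ u v : Fin m →₀ ℕ, degA A u = degA A v ∧
      f = monomial u (1 : K) - monomial v 1} with hBdef
  have hBspan : Ideal.span B = toricIdeal K A := rfl
  set S : Set (MvPolynomial (Fin m) K) := B \ {f, -f} with hSdef
  have cw_f : coeff w f = 0 := by
    rw [hfdef, coeff_binomial]
    simp [Ne.symm hwu, Ne.symm hwv]
  have cw_nf : coeff w (-f) = 0 := by
    rw [coeff_neg, cw_f, neg_zero]
  have cg1 : coeff w (monomial u (1:K) - monomial w 1) = -1 := by
    rw [coeff_binomial]; simp [Ne.symm hwu]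
  have cg2 : coeff w (monomial w (1:K) - monomial v 1) = 1 := by
    rw [coeff_binomial]; simp [Ne.symm hwv]
  have hg1 : (monomial u (1:K) - monomial w 1) ∈ S := by
    refine ⟨⟨u, w, hw.symm, rfl⟩, ?_⟩
    intro hmem
    rcases Set.mem_insert_iff.mp hmem with h | h
    · rw [h, cw_f] at cg1; exact one_ne_zero (neg_eq_zero.mp cg1.symm)
    · rw [Set.mem_singleton_iff.mp h, cw_nf] at cg1
      exact one_ne_zero (neg_eq_zero.mp cg1.symm)
  have hg2 : (monomial w (1:K) - monomial v 1) ∈ S := by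
    refine ⟨⟨w, v, hw.trans hdeg, rfl⟩, ?_⟩
    intro hmem
    rcases Set.mem_insert_iff.mp hmem with h | h
    · rw [h, cw_f] at cg2; exact one_ne_zero cg2.symm
    · rw [Set.mem_singleton_iff.mp h, cw_nf] at cg2
      exact one_ne_zero cg2.symm
  have hspan : Ideal.span S = toricIdeal K A := by
    rw [← hBspan]
    apply le_antisymm (Ideal.span_mono Set.diff_subset)
    rw [Ideal.span_le]
    rintro g hg
    have hfmem : f ∈ Ideal.span S := by
      have hmem := add_mem (Ideal.subset_span hg1) (Ideal.subset_span hg2)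
      rwa [show (monomial u (1:K) - monomial w 1) + (monomial w 1 - monomial v 1) = f
        from by rw [hfdef]; ring] at hmem
    by_cases h1 : g = f
    · rw [h1]; exact hfmem
    by_cases h2 : g = -f
    · rw [h2]; exact neg_mem hfmem
    · refine Ideal.subset_span ⟨hg, ?_⟩
      intro hmem
      rcases Set.mem_insert_iff.mp hmem with h | h
      · exact h1 h
      · exact h2 (Set.mem_singleton_iff.mp h)
  have hbin : IsBinomialSet K A S := fun g hg => hg.1
  rcases hind.2 S hbin hspan with h | h
  · exact h.2 (Set.mem_insert _ _)
  · exact h.2 (Set.mem_insert_iff.mpr (Or.inr rfl))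

end Aux

/-- If `I_A` is generated by its indispensable binomials, then every connected
component of the indispensable complex (i.e. every `A`-degree class of `T_A`) is
a 1-simplex: it has exactly two vertices. -/
theorem statement18 {K : Type*} [Field K] {m n : ℕ} (A : Fin m → Fin n → ℤ)
    (hA : IsPointed A)
    (hgen : Ideal.span {f | IsIndispensableBinomial K A f} = toricIdeal K A) :
    ∀ u ∈ TA A, ∃ v ∈ TA A, v ≠ u ∧ degA A v = degA A u ∧
      ∀ w ∈ TA A, degA A w = degA A u → w = u ∨ w = v := by
  classical
  intro u hu
  obtain ⟨huM, humin⟩ := hu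
  obtain ⟨v₀, hv₀ne, hv₀deg⟩ := huM
  have hf₀ : (monomial u (1:K) - monomial v₀ 1) ∈
      Ideal.span {f | IsIndispensableBinomial K A f} := by
    rw [hgen]
    exact Ideal.subset_span ⟨u, v₀, hv₀deg.symm, rfl⟩
  have hcu : coeff u (monomial u (1:K) - monomial v₀ 1) ≠ 0 := by
    rw [coeff_binomial]
    simp [hv₀ne]
  obtain ⟨g, hgInd, s, hsle, hcs⟩ := span_exists_le hf₀ u hcu
  obtain ⟨a, a', hane, hadeg, rfl⟩ := indisp_form A hgInd
  have hs : s = a ∨ s = a' := by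
    by_contra hcon
    push_neg at hcon
    rw [coeff_binomial] at hcs
    simp [Ne.symm hcon.1, Ne.symm hcon.2] at hcs
  have key : ∃ v, v ≠ u ∧ degA A v = degA A u ∧
      IsIndispensableBinomial K A (monomial u 1 - monomial v 1) := by
    rcases hs with rfl | rfl
    · have haM : s ∈ MAset A := ⟨a', Ne.symm hane, hadeg.symm⟩
      have heq : s = u := humin s haM hsle
      subst heq
      exact ⟨a', fun h => hane (h ▸ rfl), by rw [← hadeg], hgInd⟩
    · have haM : s ∈ MAset A := ⟨a, hane, hadeg⟩
      have heq : s = u := humin s haM hsle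
      subst heq
      refine ⟨a, fun h => hane (h ▸ rfl), hadeg, ?_⟩
      have := indisp_neg hgInd
      rwa [neg_sub] at this
  obtain ⟨v, hvu, hvdeg, hvind⟩ := key
  have Fib : ∀ w, degA A w = degA A u → w = u ∨ w = v :=
    fiber_two A (Ne.symm hvu) hvdeg.symm hvind
  have hvTA : v ∈ TA A := by
    refine ⟨⟨u, Ne.symm hvu, hvdeg.symm⟩, ?_⟩
    intro w hwM hwle
    obtain ⟨w', hw'ne, hw'deg⟩ := hwM
    have hwt : w + (v - w) = v := by
      ext i
      rw [Finsupp.add_apply, Finsupp.tsub_apply]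
      exact Nat.add_sub_cancel' (hwle i)
    have hdu' : degA A (w' + (v - w)) = degA A u := by
      rw [degA_add, hw'deg, ← degA_add, hwt, hvdeg]
    rcases Fib (w' + (v - w)) hdu' with h | h
    · have hw'M : w' ∈ MAset A := ⟨w, Ne.symm hw'ne, hw'deg.symm⟩
      have hw'le : ∀ i, w' i ≤ u i := by
        intro i
        rw [← h, Finsupp.add_apply]
        exact Nat.le_add_right _ _
      have hw'u : w' = u := humin w' hw'M hw'le
      rw [hw'u] at h
      have ht0 : v - w = 0 := by
        have := h
        nth_rewrite 2 [← add_zero u] at this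
        exact add_left_cancel this
      rw [ht0, add_zero] at hwt
      exact hwt
    · have h2 : w' + (v - w) = w + (v - w) := by rw [hwt]; exact h
      exact absurd (add_right_cancel h2) hw'ne
  exact ⟨v, hvTA, hvu, hvdeg, fun w _ hwdeg => Fib w hwdeg⟩
end
end
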